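/- arXiv:1712.06373 — 7 statements merged into one kernel-verified Lean document; each statement's English description precedes it below -/
import Mathlib

section
/- Let $u_0,\ldots,u_{2M} : D \to \mathbb{R}$ be $C^{2M}$ functions on an interval $D$ and let $x_0 \in D$. Define, for $t \in D \setminus \{x_0\}$, $E(t) = \frac{(2M)!}{(t-x_0)^{2M}} \det B(t)$, where $B(t)$ is the $(2M+1)\times(2M+1)$ matrix whose first row is $(u_0(t),\ldots,u_{2M}(t))$ and whose remaining $2M$ rows are $(u_j^{(k)}(x_0))_j$ for $k=0,\ldots,2M-1$. Then $E$ extends continuously to $D$ with value at $x_0$ equal to the determinant of the matrix whose rows are $(u_j^{(k)}(x_0))_j$ for $k=0,\ldots,2M$. -/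
open scoped BigOperators

open Set Finset

/-- On an `Icc`, iterated derivatives within coincide with global iterated derivatives
for a globally `C^N` function. -/
lemma iterWithin_Icc {f : ℝ → ℝ} {N : ℕ} (hf : ContDiff ℝ (N : ℕ∞) f) {a b : ℝ} (hab : a < b)
    {k : ℕ} (hk : k ≤ N) {y : ℝ} (hy : y ∈ Set.Icc a b) :
    iteratedDerivWithin k f (Set.Icc a b) y = iteratedDeriv k f y := by
  have h := (contDiff_iff_ftaylorSeries.mp hf).hasFTaylorSeriesUpToOn (Set.Icc a b)
  have h2 := h.eq_iteratedFDerivWithin_of_uniqueDiffOn (m := k) (by exact_mod_cast hk)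
    (uniqueDiffOn_Icc hab) hy
  rw [iteratedDerivWithin_eq_iteratedFDerivWithin, iteratedDeriv_eq_iteratedFDeriv, ← h2]
  rfl

/-- Two-sided Lagrange remainder for even top order. -/
lemma taylor_remainder_abs {N : ℕ} (hN : 0 < N) (hNe : Even N) {f : ℝ → ℝ}
    (hf : ContDiff ℝ (N : ℕ∞) f) (x0 t : ℝ) (ht : t ≠ x0) :
    ∃ ξ : ℝ, |ξ - x0| < |t - x0| ∧
      f t - ∑ k ∈ Finset.range N, iteratedDeriv k f x0 * (t - x0) ^ k / (k.factorial : ℝ)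
        = iteratedDeriv N f ξ * (t - x0) ^ N / (N.factorial : ℝ) := by
  obtain ⟨n, rfl⟩ : ∃ n, N = n + 1 := ⟨N - 1, (Nat.succ_pred_eq_of_pos hN).symm⟩
  rcases ht.lt_or_gt with hlt | hlt
  · -- t < x0 : reflect
    set g : ℝ → ℝ := fun s => f (-s) with hg
    have hgc : ContDiff ℝ ((n+1 : ℕ) : ℕ∞) g := hf.comp contDiff_neg
    have hx : -x0 < -t := by linarith
    have hfOn : ContDiffOn ℝ n g (Icc (-x0) (-t)) :=
      (hgc.of_le (by exact_mod_cast Nat.le_succ n)).contDiffOn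
    have hd : Differentiable ℝ (iteratedDeriv n g) :=
      hgc.differentiable_iteratedDeriv n (by exact_mod_cast Nat.lt_succ_self n)
    have hdiff : DifferentiableOn ℝ (iteratedDerivWithin n g (Icc (-x0) (-t))) (Ioo (-x0) (-t)) :=
      (hd.differentiableOn).congr fun y hy =>
        iterWithin_Icc hgc hx (Nat.le_succ n) (Ioo_subset_Icc_self hy)
    obtain ⟨ξ', hξ', heq⟩ := by
      have h := taylor_mean_remainder_lagrange (f := g) (n := n) hx.ne (by rwa [Set.uIcc_of_le hx.le]) (by rwa [Set.uIcc_of_le hx.le, Set.uIoo_of_le hx.le])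
      rw [Set.uIcc_of_le hx.le, Set.uIoo_of_le hx.le] at h; exact h
    have hTay : taylorWithinEval g n (Icc (-x0) (-t)) (-x0) (-t)
        = ∑ k ∈ Finset.range (n+1), iteratedDeriv k f x0 * (t - x0) ^ k / (k.factorial : ℝ) := by
      rw [taylor_within_apply]
      refine Finset.sum_congr rfl fun k hk => ?_
      rw [iterWithin_Icc hgc hx ((Finset.mem_range.mp hk).le)
        (left_mem_Icc.mpr hx.le)]
      have hiter : iteratedDeriv k g (-x0) = (-1 : ℝ) ^ k • iteratedDeriv k f x0 := by
        rw [hg, iteratedDeriv_comp_neg]; simp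
      rw [hiter]
      have hb : ((-t - -x0) * (-1) : ℝ) = t - x0 := by ring
      have hpow : (-t - -x0 : ℝ) ^ k * (-1 : ℝ) ^ k = (t - x0) ^ k := by
        rw [← mul_pow, hb]
      simp only [smul_eq_mul]
      linear_combination ((k.factorial : ℝ))⁻¹ * iteratedDeriv k f x0 * hpow
    have hmem : -ξ' ∈ Ioo t x0 := by
      rcases hξ' with ⟨h1, h2⟩; constructor <;> linarith
    refine ⟨-ξ', ?_, ?_⟩
    · rw [abs_of_neg (by rcases hmem with ⟨_, h2⟩; linarith : -ξ' - x0 < 0),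
        abs_of_neg (by linarith : t - x0 < 0)]
      rcases hmem with ⟨h1, _⟩; linarith
    · have h1 : g (-t) = f t := by simp [hg]
      have h2 : iteratedDerivWithin (n+1) g (Icc (-x0) (-t)) ξ'
          = iteratedDeriv (n+1) g ξ' :=
        iterWithin_Icc hgc hx le_rfl (Ioo_subset_Icc_self hξ')
      have h3 : iteratedDeriv (n+1) g ξ' = (-1 : ℝ) ^ (n+1) • iteratedDeriv (n+1) f (-ξ') := by
        rw [hg, iteratedDeriv_comp_neg]
      have hb : ((-t - -x0) * (-1) : ℝ) = t - x0 := by ring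
      have h4 : (-t - -x0 : ℝ) ^ (n+1) * (-1 : ℝ) ^ (n+1) = (t - x0) ^ (n+1) := by
        rw [← mul_pow, hb]
      rw [h1, hTay] at heq
      rw [heq, h2, h3]
      simp only [smul_eq_mul]
      calc (-1:ℝ) ^ (n+1) * iteratedDeriv (n+1) f (-ξ') * (-t - -x0) ^ (n+1) / ((n+1).factorial : ℝ)
          = iteratedDeriv (n+1) f (-ξ') * ((-t - -x0) ^ (n+1) * (-1:ℝ)^(n+1)) / ((n+1).factorial : ℝ) := by
            ring
        _ = _ := by rw [h4]
  · -- x0 < t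
    have hx : x0 < t := hlt
    have hfOn : ContDiffOn ℝ n f (Icc x0 t) :=
      (hf.of_le (by exact_mod_cast Nat.le_succ n)).contDiffOn
    have hd : Differentiable ℝ (iteratedDeriv n f) :=
      hf.differentiable_iteratedDeriv n (by exact_mod_cast Nat.lt_succ_self n)
    have hdiff : DifferentiableOn ℝ (iteratedDerivWithin n f (Icc x0 t)) (Ioo x0 t) :=
      (hd.differentiableOn).congr fun y hy =>
        iterWithin_Icc hf hx (Nat.le_succ n) (Ioo_subset_Icc_self hy)
    obtain ⟨ξ, hξ, heq⟩ := by
      have h := taylor_mean_remainder_lagrange (f := f) (n := n) hx.ne (by rwa [Set.uIcc_of_le hx.le]) (by rwa [Set.uIcc_of_le hx.le, Set.uIoo_of_le hx.le])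
      rw [Set.uIcc_of_le hx.le, Set.uIoo_of_le hx.le] at h; exact h
    have hTay : taylorWithinEval f n (Icc x0 t) x0 t
        = ∑ k ∈ Finset.range (n+1), iteratedDeriv k f x0 * (t - x0) ^ k / (k.factorial : ℝ) := by
      rw [taylor_within_apply]
      refine Finset.sum_congr rfl fun k hk => ?_
      rw [iterWithin_Icc hf hx ((Finset.mem_range.mp hk).le)
        (left_mem_Icc.mpr hx.le)]
      simp only [smul_eq_mul]; ring
    refine ⟨ξ, ?_, ?_⟩
    · rw [abs_of_pos (by rcases hξ with ⟨h1, _⟩; linarith : (0:ℝ) < ξ - x0),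
        abs_of_pos (by linarith : (0:ℝ) < t - x0)]
      rcases hξ with ⟨_, h2⟩; linarith
    · rw [hTay] at heq
      rw [heq, iterWithin_Icc hf hx le_rfl (Ioo_subset_Icc_self hξ)]

/-- Continuity of the rescaled Taylor remainder. -/
lemma cont_g {N : ℕ} (hN : 0 < N) (hNe : Even N) {f : ℝ → ℝ}
    (hf : ContDiff ℝ (N : ℕ∞) f) (x0 : ℝ) :
    Continuous (fun t => if t = x0 then iteratedDeriv N f x0
      else (N.factorial : ℝ) * (f t - ∑ k ∈ Finset.range N,
        iteratedDeriv k f x0 * (t - x0) ^ k / (k.factorial : ℝ)) / (t - x0) ^ N) := by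
  set G : ℝ → ℝ := fun t => if t = x0 then iteratedDeriv N f x0
      else (N.factorial : ℝ) * (f t - ∑ k ∈ Finset.range N,
        iteratedDeriv k f x0 * (t - x0) ^ k / (k.factorial : ℝ)) / (t - x0) ^ N with hG
  rw [continuous_iff_continuousAt]
  intro x
  by_cases hx : x = x0
  · subst hx
    have hc : Continuous (iteratedDeriv N f) :=
      hf.continuous_iteratedDeriv N (by exact_mod_cast le_refl (N : ℕ∞))
    rw [Metric.continuousAt_iff]
    intro ε hε
    obtain ⟨δ, hδpos, hδ⟩ := Metric.continuousAt_iff.mp hc.continuousAt ε hε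
    refine ⟨δ, hδpos, fun {t} hdist => ?_⟩
    by_cases htx : t = x
    · simp [htx, hε]
    · obtain ⟨ξ, hξ, heq⟩ := taylor_remainder_abs hN hNe hf x t htx
      have hpow : (t - x) ^ N ≠ 0 := pow_ne_zero _ (sub_ne_zero.mpr htx)
      have hfac : ((N.factorial : ℝ)) ≠ 0 := Nat.cast_ne_zero.mpr (Nat.factorial_ne_zero N)
      have hGt : G t = iteratedDeriv N f ξ := by
        rw [hG]; simp only [if_neg htx, heq]
        field_simp
      have hGx : G x = iteratedDeriv N f x := by rw [hG]; simp
      rw [hGt, hGx]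
      apply hδ
      rw [Real.dist_eq]
      calc |ξ - x| < |t - x| := hξ
        _ < δ := by rwa [Real.dist_eq] at hdist
  · have hsum : Continuous (fun t : ℝ => ∑ k ∈ Finset.range N,
        iteratedDeriv k f x0 * (t - x0) ^ k / (k.factorial : ℝ)) := by
      apply continuous_finset_sum
      intro k _
      fun_prop
    have h1 : ContinuousAt (fun t : ℝ => (N.factorial : ℝ) * (f t - ∑ k ∈ Finset.range N,
        iteratedDeriv k f x0 * (t - x0) ^ k / (k.factorial : ℝ)) / (t - x0) ^ N) x := by
      apply ContinuousAt.div
      · exact (continuous_const.mul (hf.continuous.sub hsum)).continuousAt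
      · fun_prop
      · exact pow_ne_zero _ (sub_ne_zero.mpr hx)
    refine h1.congr ?_
    have hev : ∀ᶠ y in nhds x, y ≠ x0 :=
      isOpen_compl_singleton.eventually_mem hx
    exact hev.mono fun y hy => by rw [hG]; simp [if_neg hy]

/-- Lemma 3.5 of the paper, second part: the rescaled determinant `E` extends
continuously to `D`, with value at `x₀` given by the full derivative-matrix determinant. -/
theorem stmt1 (M : ℕ) (hM : 1 ≤ M) (D : Set ℝ) (hD : D.OrdConnected)
    (u : Fin (2 * M + 1) → ℝ → ℝ) (hu : ∀ j, ContDiff ℝ (2 * M) (u j))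
    (x0 : ℝ) (hx0 : x0 ∈ D) :
    ∃ F : ℝ → ℝ, ContinuousOn F D ∧
      (∀ t ∈ D, t ≠ x0 →
        F t = (((2 * M).factorial : ℝ) / (t - x0) ^ (2 * M)) *
          (Matrix.of fun k j : Fin (2 * M + 1) =>
            if k.val = 0 then u j t else iteratedDeriv (k.val - 1) (u j) x0).det) ∧
      F x0 = (Matrix.of fun k j : Fin (2 * M + 1) => iteratedDeriv k.val (u j) x0).det := by
  classical
  have hN0 : 0 < 2 * M := by omega
  have hNe : Even (2 * M) := ⟨M, by ring⟩
  have hu' : ∀ j, ContDiff ℝ ((2 * M : ℕ) : ℕ∞) (u j) := fun j => by exact_mod_cast hu j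
  set g : Fin (2 * M + 1) → ℝ → ℝ := fun j t =>
    if t = x0 then iteratedDeriv (2 * M) (u j) x0
    else ((2 * M).factorial : ℝ) * (u j t - ∑ k ∈ Finset.range (2 * M),
      iteratedDeriv k (u j) x0 * (t - x0) ^ k / (k.factorial : ℝ)) / (t - x0) ^ (2 * M) with hg
  set F : ℝ → ℝ := fun t => (Matrix.of fun k j : Fin (2 * M + 1) =>
    if k.val = 0 then g j t else iteratedDeriv (k.val - 1) (u j) x0).det with hF
  have hgc : ∀ j, Continuous (g j) := fun j => cont_g hN0 hNe (hu' j) x0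
  refine ⟨F, ?_, ?_, ?_⟩
  · -- continuity
    have : Continuous F := by
      apply Continuous.matrix_det
      apply continuous_pi; intro k; apply continuous_pi; intro j
      by_cases hk : k.val = 0
      · simpa only [Matrix.of_apply, if_pos hk] using hgc j
      · simp only [Matrix.of_apply, if_neg hk]; exact continuous_const
    exact this.continuousOn
  · -- value away from x0
    intro t _ htne
    set B : Matrix (Fin (2 * M + 1)) (Fin (2 * M + 1)) ℝ := Matrix.of fun k j =>
      if k.val = 0 then u j t else iteratedDeriv (k.val - 1) (u j) x0 with hB
    set c : ℝ := ((2 * M).factorial : ℝ) / (t - x0) ^ (2 * M) with hc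
    set cc : Fin (2 * M + 1) → ℝ := fun k =>
      if k.val = 0 then 0 else -((t - x0) ^ (k.val - 1) / (((k.val - 1).factorial : ℝ))) with hcc
    have hsum : ∀ j, (∑ k ∈ Finset.univ.erase 0, cc k * B k j)
        = -∑ k ∈ Finset.range (2 * M),
            iteratedDeriv k (u j) x0 * (t - x0) ^ k / (k.factorial : ℝ) := by
      intro j
      have herase : ∑ k ∈ Finset.univ.erase 0, cc k * B k j
          = ∑ k : Fin (2 * M + 1), cc k * B k j := by
        rw [← Finset.add_sum_erase Finset.univ (fun k => cc k * B k j) (Finset.mem_univ 0)]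
        simp [hcc]
      rw [herase, Fin.sum_univ_succ]
      have h0 : cc 0 * B 0 j = 0 := by simp [hcc]
      rw [h0, zero_add]
      rw [← Finset.sum_neg_distrib]
      rw [← Fin.sum_univ_eq_sum_range (fun k =>
        -(iteratedDeriv k (u j) x0 * (t - x0) ^ k / (k.factorial : ℝ)))]
      refine Finset.sum_congr rfl fun i _ => ?_
      have hsv : (i.succ : Fin (2 * M + 1)).val = i.val + 1 := rfl
      simp only [hcc, hB, Matrix.of_apply, hsv, Nat.add_sub_cancel]
      rw [if_neg (by omega), if_neg (by omega)]
      ring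
    have key : (Matrix.of fun k j : Fin (2 * M + 1) =>
        if k.val = 0 then g j t else iteratedDeriv (k.val - 1) (u j) x0)
        = Matrix.updateRow B 0 (c • ((1 : ℝ) • B 0 + ∑ k ∈ Finset.univ.erase 0, cc k • B k)) := by
      funext k j
      rcases eq_or_ne k 0 with rfl | hk
      · simp only [Matrix.of_apply, Matrix.updateRow_self, Fin.val_zero, if_true]
        have hB0 : B 0 j = u j t := by simp [hB]
        simp only [Pi.smul_apply, Pi.add_apply, Finset.sum_apply, smul_eq_mul, one_mul]
        rw [hsum j, hB0]
        rw [hg]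
        simp only [if_neg htne]
        rw [hc]; ring
      · have hkv : k.val ≠ 0 := fun h => hk (Fin.ext (by simpa using h))
        simp only [Matrix.of_apply, Matrix.updateRow_ne hk]
        rw [if_neg hkv]
        simp [hB, if_neg hkv, hk]
    have hdet : (Matrix.of fun k j : Fin (2 * M + 1) =>
        if k.val = 0 then g j t else iteratedDeriv (k.val - 1) (u j) x0).det = c * B.det := by
      rw [key, Matrix.det_updateRow_smul,
        Matrix.det_updateRow_sum_aux B (Finset.univ.erase 0)
          (Finset.notMem_erase 0 _) cc 1, smul_eq_mul, one_mul]
    have hFt : F t = (Matrix.of fun k j : Fin (2 * M + 1) =>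
        if k.val = 0 then g j t else iteratedDeriv (k.val - 1) (u j) x0).det := rfl
    rw [hFt, hdet]
  · -- value at x0
    have hg0 : ∀ j, g j x0 = iteratedDeriv (2 * M) (u j) x0 := fun j => by simp [hg]
    set T : Matrix (Fin (2 * M + 1)) (Fin (2 * M + 1)) ℝ :=
      Matrix.of fun k j => iteratedDeriv k.val (u j) x0 with hT
    set σ : Equiv.Perm (Fin (2 * M + 1)) := (finRotate (2 * M + 1)).symm with hσ
    have hrow : (Matrix.of fun k j : Fin (2 * M + 1) =>
        if k.val = 0 then g j x0 else iteratedDeriv (k.val - 1) (u j) x0)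
        = T.submatrix σ id := by
      funext k j
      simp only [Matrix.submatrix_apply, id_eq]
      refine Fin.cases ?_ (fun i => ?_) k
      · have hs : σ 0 = Fin.last (2 * M) := by
          rw [hσ, Equiv.symm_apply_eq, finRotate_last]
        simp only [Matrix.of_apply, hs, hT, Fin.val_zero, if_true, Fin.val_last]
        exact hg0 j
      · have hs : σ i.succ = i.castSucc := by
          rw [hσ, Equiv.symm_apply_eq, finRotate_succ_apply, Fin.coeSucc_eq_succ]
        simp only [Matrix.of_apply, hs, hT]
        rw [if_neg (by simp [Fin.val_succ])]
        simp [Fin.val_succ]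
    have hFx0 : F x0 = (Matrix.of fun k j : Fin (2 * M + 1) =>
        if k.val = 0 then g j x0 else iteratedDeriv (k.val - 1) (u j) x0).det := rfl
    have hsign : Equiv.Perm.sign σ = 1 := by
      rw [hσ, Equiv.Perm.sign_symm, sign_finRotate]
      exact Even.neg_one_pow hNe
    rw [hFx0, hrow, Matrix.det_permute, hsign]
    simp
end

section
/- With the notation of the paper: let $H$ be a real Hilbert space, $\varphi: D \to H$ be $C^2$, $x_1<\cdots<x_M$ in $D$ with $\Gamma_x = (\varphi(x_1),\varphi'(x_1),\ldots,\varphi(x_M),\varphi'(x_M))$ of full column rank, and let $\eta_V$ be the vanishing-derivatives precertificate. For each $i \in \{1,\ldots,M\}$, the $(2M+1)\times(2M+1)$ determinant whose first $2M$ rows are $(\langle \varphi^{(\epsilon)}(x_j), \varphi(x_1)\rangle, \langle \varphi^{(\epsilon)}(x_j), \varphi'(x_1)\rangle, \ldots, \langle \varphi^{(\epsilon)}(x_j), \varphi'(x_M)\rangle, \delta_{\epsilon 0})$ for $j=1,\ldots,M$ and $\epsilon \in \{0,1\}$ (last entry $1$ for $\epsilon=0$, $0$ for $\epsilon=1$),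 and whose last row is $(\langle \varphi''(x_i), \varphi(x_1)\rangle, \ldots, \langle \varphi''(x_i), \varphi'(x_M)\rangle, 0)$, equals $-\eta_V''(x_i)\,\det(\Gamma_x^*\Gamma_x)$. -/
open scoped BigOperators

/-- Lemma 3.2 of the paper (Cramer-rule identity for `η_V''(xᵢ)`):
the bordered Gram determinant equals `-η_V''(xᵢ) det(Γ_x* Γ_x)`. -/
theorem stmt5 {H : Type*} [NormedAddCommGroup H] [InnerProductSpace ℝ H] [CompleteSpace H]
    (M : ℕ) (hM : 1 ≤ M)
    (φ : ℝ → H) (hφ : ContDiff ℝ 2 φ)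
    (x : Fin M → ℝ) (hx : StrictMono x)
    (w : Fin M × Fin 2 → H)
    (hw : w = fun p => if p.2 = 0 then φ (x p.1) else deriv φ (x p.1))
    (hlin : LinearIndependent ℝ w)
    (pV : H)
    (hpV1 : ∀ i, (inner ℝ (φ (x i)) pV : ℝ) = 1)
    (hpV2 : ∀ i, (inner ℝ (deriv φ (x i)) pV : ℝ) = 0)
    (hmin : ∀ q : H, (∀ i, (inner ℝ (φ (x i)) q : ℝ) = 1) →
      (∀ i, (inner ℝ (deriv φ (x i)) q : ℝ) = 0) → ‖pV‖ ≤ ‖q‖) :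
    ∀ i : Fin M,
      (Matrix.of fun r c : Option (Fin M × Fin 2) =>
        match r, c with
        | some p, some q => (inner ℝ (w p) (w q) : ℝ)
        | some p, none => if p.2 = 0 then (1 : ℝ) else 0
        | none, some q => (inner ℝ (iteratedDeriv 2 φ (x i)) (w q) : ℝ)
        | none, none => (0 : ℝ)).det
      = -(iteratedDeriv 2 (fun t => (inner ℝ (φ t) pV : ℝ)) (x i)) *
          (Matrix.of fun p q : Fin M × Fin 2 => (inner ℝ (w p) (w q) : ℝ)).det := by
  classical
  intro i
  have hw0 : ∀ j, w (j, 0) = φ (x j) := by intro j; simp [hw]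
  have hw1 : ∀ j, w (j, 1) = deriv φ (x j) := by intro j; simp [hw]
  -- second derivative of η_V
  set η : ℝ := (inner ℝ (iteratedDeriv 2 φ (x i)) pV : ℝ) with hηdef
  have heta : iteratedDeriv 2 (fun t => (inner ℝ (φ t) pV : ℝ)) (x i) = η := by
    have h1 : (fun t => (inner ℝ (φ t) pV : ℝ)) = (innerSL ℝ pV) ∘ φ := by
      funext t
      simp [real_inner_comm]
    have h2 : ((2 : ℕ) : WithTop ℕ∞) ≤ 2 := by norm_cast
    rw [h1, iteratedDeriv_eq_iteratedFDeriv,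
      ContinuousLinearMap.iteratedFDeriv_comp_left (innerSL ℝ pV) (hφ.contDiffAt (x := x i)) h2]
    simp [← iteratedDeriv_eq_iteratedFDeriv, real_inner_comm, hηdef]
  -- the span of the family w
  set K := Submodule.span ℝ (Set.range w) with hKdef
  haveI : FiniteDimensional ℝ K := FiniteDimensional.span_of_finite ℝ (Set.finite_range w)
  have hwK : ∀ p, w p ∈ K := fun p => Submodule.subset_span ⟨p, rfl⟩
  have hproj : ∀ (v : H) (p : Fin M × Fin 2),
      (inner ℝ (w p) ((K.orthogonalProjectionOnto v : H)) : ℝ) = inner ℝ (w p) v := by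
    intro v p
    have h : v - (K.orthogonalProjectionOnto v : H) ∈ Kᗮ := Submodule.sub_starProjection_mem_orthogonal v
    have h2 := (Submodule.mem_orthogonal K _).1 h (w p) (hwK p)
    rw [inner_sub_right] at h2
    linarith
  -- pV belongs to K
  have hpVK : pV ∈ K := by
    set u : H := (K.orthogonalProjectionOnto pV : H) with hudef
    have hu1 : ∀ j, (inner ℝ (φ (x j)) u : ℝ) = 1 := by
      intro j; rw [← hw0 j, hproj pV (j, 0), hw0 j]; exact hpV1 j
    have hu2 : ∀ j, (inner ℝ (deriv φ (x j)) u : ℝ) = 0 := by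
      intro j; rw [← hw1 j, hproj pV (j, 1), hw1 j]; exact hpV2 j
    have hle : ‖pV‖ ≤ ‖u‖ := hmin u hu1 hu2
    have horth : (inner ℝ (pV - u) u : ℝ) = 0 := by
      have h : pV - (K.orthogonalProjectionOnto pV : H) ∈ Kᗮ := Submodule.sub_starProjection_mem_orthogonal pV
      have h2 := (Submodule.mem_orthogonal K _).1 h u (K.orthogonalProjectionOnto pV).2
      rw [real_inner_comm] at h2
      exact h2
    have hsq : ‖pV‖ ^ 2 = ‖pV - u‖ ^ 2 + ‖u‖ ^ 2 := by
      have h3 : pV = (pV - u) + u := by abel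
      calc ‖pV‖ ^ 2 = ‖(pV - u) + u‖ ^ 2 := by rw [← h3]
        _ = ‖pV - u‖ ^ 2 + 2 * (inner ℝ (pV - u) u : ℝ) + ‖u‖ ^ 2 := norm_add_sq_real _ _
        _ = ‖pV - u‖ ^ 2 + ‖u‖ ^ 2 := by rw [horth]; ring
    have hle2 : ‖pV‖ ^ 2 ≤ ‖u‖ ^ 2 := by
      have := pow_le_pow_left₀ (norm_nonneg pV) hle 2
      exact this
    have hz : ‖pV - u‖ ^ 2 ≤ 0 := by linarith
    have hz2 : pV - u = 0 := by
      have := sq_nonneg ‖pV - u‖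
      have hn : ‖pV - u‖ = 0 := by nlinarith
      exact norm_eq_zero.1 hn
    have : pV = u := by rwa [sub_eq_zero] at hz2
    rw [this]
    exact (K.orthogonalProjectionOnto pV).2
  -- constraints in terms of w
  have hpVw : ∀ p : Fin M × Fin 2, (inner ℝ (w p) pV : ℝ) = if p.2 = 0 then 1 else 0 := by
    rintro ⟨j, k⟩
    fin_cases k
    · simpa [hw0 j] using hpV1 j
    · simpa [hw1 j] using hpV2 j
  -- coefficients of the projection of φ''(x i)
  set v2 : H := iteratedDeriv 2 φ (x i) with hv2def
  obtain ⟨d, hd⟩ := (Submodule.mem_span_range_iff_exists_fun ℝ).1 (K.orthogonalProjectionOnto v2).2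
  -- hd : ∑ p, d p • w p = K.orthogonalProjectionOnto v2
  have hdb : ∀ q : Fin M × Fin 2,
      (inner ℝ v2 (w q) : ℝ) = ∑ p, d p * (inner ℝ (w p) (w q) : ℝ) := by
    intro q
    rw [real_inner_comm, ← hproj v2 q, ← hd, inner_sum]
    refine Finset.sum_congr rfl fun p _ => ?_
    rw [real_inner_smul_right, real_inner_comm]
  have hde : ∑ p, d p * (if p.2 = 0 then (1 : ℝ) else 0) = η := by
    have h1 : ∑ p, d p * (if p.2 = 0 then (1 : ℝ) else 0)
        = (inner ℝ (∑ p, d p • w p) pV : ℝ) := by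
      rw [sum_inner]
      refine Finset.sum_congr rfl fun p _ => ?_
      rw [real_inner_smul_left, hpVw p]
    rw [h1, hd]
    have h : v2 - (K.orthogonalProjectionOnto v2 : H) ∈ Kᗮ := Submodule.sub_starProjection_mem_orthogonal v2
    have h2 := (Submodule.mem_orthogonal K _).1 h pV hpVK
    rw [inner_sub_right] at h2
    have h3 : (inner ℝ pV ((K.orthogonalProjectionOnto v2 : H)) : ℝ) = inner ℝ pV v2 := by linarith
    rw [real_inner_comm, h3, hηdef]
    exact real_inner_comm v2 pV
  -- determinant manipulation
  set B : Matrix (Option (Fin M × Fin 2)) (Option (Fin M × Fin 2)) ℝ :=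
    Matrix.of fun r c =>
      match r, c with
      | some p, some q => (inner ℝ (w p) (w q) : ℝ)
      | some p, none => if p.2 = 0 then (1 : ℝ) else 0
      | none, some q => (inner ℝ v2 (w q) : ℝ)
      | none, none => (0 : ℝ) with hBdef
  set B' : Matrix (Option (Fin M × Fin 2)) (Option (Fin M × Fin 2)) ℝ :=
    Matrix.of fun r c =>
      match r, c with
      | some p, some q => (inner ℝ (w p) (w q) : ℝ)
      | some p, none => if p.2 = 0 then (1 : ℝ) else 0
      | none, some _ => (0 : ℝ)
      | none, none => -η with hB'def
  set c : Option (Fin M × Fin 2) → ℝ := fun r => Option.elim r 1 d with hcdef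
  have hBrow : B = B'.updateRow none (∑ r, c r • B' r) := by
    ext r q
    cases r with
    | some p =>
        rw [Matrix.updateRow_ne (Option.some_ne_none p)]
        cases q <;> rfl
    | none =>
        rw [Matrix.updateRow_self]
        have hsum : (∑ r, c r • B' r) q = ∑ r, c r * B' r q := by
          simp [Finset.sum_apply]
        rw [hsum, Fintype.sum_option]
        cases q with
        | some q0 =>
            show (inner ℝ v2 (w q0) : ℝ) = 1 * (0 : ℝ) + ∑ p, d p * (inner ℝ (w p) (w q0) : ℝ)
            rw [hdb q0]; ring
        | none =>
            show (0 : ℝ) = 1 * (-η) + ∑ p, d p * (if p.2 = 0 then (1 : ℝ) else 0)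
            rw [hde]; ring
  have hdetBB' : B.det = B'.det := by
    rw [hBrow, Matrix.det_updateRow_sum]
    show (1 : ℝ) • B'.det = B'.det
    rw [one_smul]
  -- block structure of B'
  set G : Matrix (Fin M × Fin 2) (Fin M × Fin 2) ℝ :=
    Matrix.of fun p q => (inner ℝ (w p) (w q) : ℝ) with hGdef
  have hB'blocks : B' = (Matrix.reindex (Equiv.optionEquivSumPUnit (Fin M × Fin 2)).symm
      (Equiv.optionEquivSumPUnit (Fin M × Fin 2)).symm)
      (Matrix.fromBlocks G
        (Matrix.of fun p (_ : PUnit.{1}) => if p.2 = 0 then (1 : ℝ) else 0)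
        0
        (Matrix.of fun (_ _ : PUnit.{1}) => -η)) := by
    ext r q
    cases r with
    | some p => cases q with
      | some q0 => rfl
      | none => rfl
    | none => cases q with
      | some q0 => rfl
      | none => rfl
  have hdetB' : B'.det = -η * G.det := by
    rw [hB'blocks, Matrix.det_reindex_self, Matrix.det_fromBlocks_zero₂₁]
    have hdu : ∀ (A : Matrix PUnit.{1} PUnit.{1} ℝ), A.det = A PUnit.unit PUnit.unit := fun A =>
      Matrix.det_unique A
    rw [hdu]
    show G.det * (-η) = -η * G.det
    ring
  show B.det = -(iteratedDeriv 2 (fun t => (inner ℝ (φ t) pV : ℝ)) (x i)) * G.det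
  rw [heta, hdetBB', hdetB']
end

section
/- With the notation of the paper: let $H$ be a real Hilbert space, $\varphi : D \to H$ be $C^{2M}$, $x_0 \in D$, and assume the vectors $\varphi(x_0), \varphi'(x_0), \ldots, \varphi^{(2M-1)}(x_0)$ are linearly independent. Let $\eta_W(x) = \langle \varphi(x), p_W\rangle$ where $p_W$ is the minimal-norm element with $\langle \varphi(x_0), p_W\rangle = 1$ and $\langle \varphi^{(k)}(x_0), p_W\rangle = 0$ for $1 \le k \le 2M-1$. Then the $(2M+1)\times(2M+1)$ determinant whose entry in row $k$ (for $k=0,\ldots,2M$) and column $\ell$ (for $\ell=0,\ldots,2M-1$) is $\langle \varphi^{(k)}(x_0), \varphi^{(\ell)}(x_0)\rangle$, and whose last column is $(1,0,\ldots,0)^T$, equals $-\eta_W^{(2M)}(x_0) \det(F^*F)$, where $F^*F$ is the Gram matrix of $(\varphi^{(k)}(x_0))_{k=0}^{2M-1}$. -/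
open scoped BigOperators

/-- Differentiating under a continuous linear functional. -/
lemma clm_iteratedDeriv_aux {H : Type*} [NormedAddCommGroup H] [NormedSpace ℝ H]
    (g : H →L[ℝ] ℝ) {f : ℝ → H} {N : ℕ} (hf : ContDiff ℝ N f) {i : ℕ} (hi : i ≤ N) (x : ℝ) :
    iteratedDeriv i (fun t => g (f t)) x = g (iteratedDeriv i f x) := by
  have h : (fun t => g (f t)) = g ∘ f := rfl
  rw [h, iteratedDeriv_eq_iteratedFDeriv, iteratedDeriv_eq_iteratedFDeriv,
    g.iteratedFDeriv_comp_left hf.contDiffAt (by exact_mod_cast hi)]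
  rfl

/-- A minimal-norm element subject to linear (inner-product) constraints lies in the span
of the constraint vectors. -/
lemma minimal_mem_span_aux {H : Type*} [NormedAddCommGroup H] [InnerProductSpace ℝ H]
    [CompleteSpace H] {n : ℕ} (hn0 : 0 < n) (v : Fin n → H) (pW : H)
    (hpW1 : (inner ℝ (v ⟨0, hn0⟩) pW : ℝ) = 1)
    (hpW2 : ∀ k : Fin n, k.val ≠ 0 → (inner ℝ (v k) pW : ℝ) = 0)
    (hmin : ∀ q : H, (inner ℝ (v ⟨0, hn0⟩) q : ℝ) = 1 →
      (∀ k : Fin n, k.val ≠ 0 → (inner ℝ (v k) q : ℝ) = 0) → ‖pW‖ ≤ ‖q‖) :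
    ∃ c : Fin n → ℝ, ∑ l, c l • v l = pW := by
  classical
  set K : Submodule ℝ H := Submodule.span ℝ (Set.range v) with hK
  haveI : FiniteDimensional ℝ K := FiniteDimensional.span_of_finite ℝ (Set.finite_range v)
  set q : H := (K.orthogonalProjectionOnto pW : H) with hq
  have hq0 : ∀ u ∈ K, (inner ℝ u (pW - q) : ℝ) = 0 := fun u hu =>
    Submodule.inner_right_of_mem_orthogonal hu (Submodule.sub_starProjection_mem_orthogonal (K := K) pW)
  have hmemv : ∀ k : Fin n, v k ∈ K := fun k => Submodule.subset_span (Set.mem_range_self k)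
  have hvk : ∀ k : Fin n, (inner ℝ (v k) q : ℝ) = inner ℝ (v k) pW := by
    intro k
    have h := hq0 (v k) (hmemv k)
    rw [inner_sub_right] at h
    linarith
  have hqK : q ∈ K := (K.orthogonalProjectionOnto pW).2
  have hpWK : pW ∈ K := by
    have horth : (inner ℝ q (pW - q) : ℝ) = 0 := hq0 q hqK
    have hpyth : ‖pW‖^2 = ‖q‖^2 + ‖pW - q‖^2 := by
      have he : pW = q + (pW - q) := by abel
      calc ‖pW‖^2 = ‖q + (pW - q)‖^2 := by rw [← he]
        _ = ‖q‖^2 + 2*(inner ℝ q (pW-q):ℝ) + ‖pW - q‖^2 := norm_add_sq_real q (pW - q)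
        _ = ‖q‖^2 + ‖pW - q‖^2 := by rw [horth]; ring
    have h2 : ‖pW - q‖ = 0 := by
      have h3 : ‖pW‖^2 ≤ ‖q‖^2 := by
        have h4 := hmin q (by rw [hvk, hpW1]) (fun k hk => by rw [hvk, hpW2 k hk])
        nlinarith [norm_nonneg pW, norm_nonneg q]
      nlinarith [norm_nonneg (pW - q)]
    have h5 : pW = q := by rwa [norm_eq_zero, sub_eq_zero] at h2
    rw [h5]; exact hqK
  exact (Submodule.mem_span_range_iff_exists_fun ℝ).mp hpWK

/-- Bordered determinant computation. -/
lemma det_bordered_aux {n : ℕ} (A : Matrix (Fin (n+1)) (Fin (n+1)) ℝ)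
    (G : Matrix (Fin n) (Fin n) ℝ) (w : Fin (n+1) → ℝ) (s : ℝ) (c : Fin n → ℝ)
    (hcol : ∀ k, w k = ∑ l, c l * A k l.castSucc)
    (hlast : ∀ k, A k (Fin.last n) = w k - s * (if k = Fin.last n then 1 else 0))
    (hsub : ∀ (k l : Fin n), A (Fin.castSucc k) (Fin.castSucc l) = G k l) :
    A.det = -s * G.det := by
  classical
  set e : Fin (n+1) → ℝ := fun k => if k = Fin.last n then 1 else 0 with he
  let L : (Fin (n+1) → ℝ) →ₗ[ℝ] ℝ :=
    { toFun := fun u => (A.updateCol (Fin.last n) u).det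
      map_add' := fun u v => Matrix.det_updateCol_add A (Fin.last n) u v
      map_smul' := fun r u => by simpa using Matrix.det_updateCol_smul A (Fin.last n) r u }
  have hterm1 : L w = 0 := by
    have hw : w = ∑ l : Fin n, c l • (fun k => A k (Fin.castSucc l)) := by
      funext k; rw [hcol k]; simp [Finset.sum_apply]
    rw [hw, map_sum]
    refine Finset.sum_eq_zero fun l _ => ?_
    rw [map_smul]
    have hz : (A.updateCol (Fin.last n) fun k => A k (Fin.castSucc l)).det = 0 := by
      apply Matrix.det_zero_of_column_eq
        (show Fin.castSucc l ≠ Fin.last n from (Fin.castSucc_lt_last l).ne)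
      intro k
      rw [Matrix.updateCol_apply, Matrix.updateCol_apply]
      simp [(Fin.castSucc_lt_last l).ne]
    simp [L, hz]
  have hterm2 : L e = G.det := by
    show (A.updateCol (Fin.last n) e).det = G.det
    rw [Matrix.det_succ_column _ (Fin.last n)]
    rw [Finset.sum_eq_single (Fin.last n)]
    · have h1 : (A.updateCol (Fin.last n) e) (Fin.last n) (Fin.last n) = 1 := by
        simp [Matrix.updateCol_apply, he]
      rw [h1]
      have hsign : ((-1 : ℝ)) ^ ((Fin.last n : Fin (n+1)) + (Fin.last n : Fin (n+1)) : ℕ) = 1 := by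
        rw [Fin.val_last]
        exact Even.neg_one_pow ⟨n, rfl⟩
      rw [hsign]
      have hsm : ((A.updateCol (Fin.last n) e).submatrix
          (Fin.last n).succAbove (Fin.last n).succAbove) = G := by
        ext k l
        rw [Matrix.submatrix_apply, Fin.succAbove_last, Matrix.updateCol_apply]
        simp [(Fin.castSucc_lt_last l).ne, hsub k l]
      rw [hsm]; ring
    · intro i _ hi
      have h0 : (A.updateCol (Fin.last n) e) i (Fin.last n) = 0 := by
        simp [Matrix.updateCol_apply, he, hi]
      rw [h0]; ring
    · simp
  have hA : A = A.updateCol (Fin.last n) (w + (-s) • e) := by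
    ext k l
    rw [Matrix.updateCol_apply]
    by_cases hl : l = Fin.last n
    · subst hl
      simp only [if_pos rfl, Pi.add_apply, Pi.smul_apply, smul_eq_mul]
      rw [hlast k]; simp [he]
      split <;> ring
    · simp [hl]
  have hAdet : A.det = L (w + (-s) • e) := by
    rw [show L (w + (-s) • e) = (A.updateCol (Fin.last n) (w + (-s) • e)).det from rfl, ← hA]
  rw [hAdet, map_add, map_smul, hterm1, hterm2]
  simp

/-- Lemma 3.3 of the paper: the bordered derivative-Gram determinant equals
`-η_W^{(2M)}(x₀) det(F*F)`. -/
theorem stmt6 {H : Type*} [NormedAddCommGroup H] [InnerProductSpace ℝ H] [CompleteSpace H]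
    (M : ℕ) (hM : 1 ≤ M)
    (φ : ℝ → H) (hφ : ContDiff ℝ (2 * M) φ) (x0 : ℝ)
    (hlin : LinearIndependent ℝ (fun k : Fin (2 * M) => iteratedDeriv k.val φ x0))
    (pW : H)
    (hpW1 : (inner ℝ (φ x0) pW : ℝ) = 1)
    (hpW2 : ∀ k : Fin (2 * M), k.val ≠ 0 → (inner ℝ (iteratedDeriv k.val φ x0) pW : ℝ) = 0)
    (hmin : ∀ q : H, (inner ℝ (φ x0) q : ℝ) = 1 →
      (∀ k : Fin (2 * M), k.val ≠ 0 → (inner ℝ (iteratedDeriv k.val φ x0) q : ℝ) = 0) →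
      ‖pW‖ ≤ ‖q‖) :
    (Matrix.of fun k l : Fin (2 * M + 1) =>
      if l.val < 2 * M then
        (inner ℝ (iteratedDeriv k.val φ x0) (iteratedDeriv l.val φ x0) : ℝ)
      else if k.val = 0 then (1 : ℝ) else 0).det
    = -(iteratedDeriv (2 * M) (fun t => (inner ℝ (φ t) pW : ℝ)) x0) *
        (Matrix.of fun k l : Fin (2 * M) =>
          (inner ℝ (iteratedDeriv k.val φ x0) (iteratedDeriv l.val φ x0) : ℝ)).det := by
  classical
  have hn0 : 0 < 2 * M := by omega
  set v : Fin (2 * M) → H := fun k => iteratedDeriv k.val φ x0 with hv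
  -- derivative of η_W
  set s : ℝ := inner ℝ (iteratedDeriv (2 * M) φ x0) pW with hs
  have hder : iteratedDeriv (2 * M) (fun t => (inner ℝ (φ t) pW : ℝ)) x0 = s := by
    have h : (fun t => (inner ℝ (φ t) pW : ℝ)) = fun t => (innerSL ℝ pW) (φ t) := by
      funext t; simp [real_inner_comm]
    have hφ' : ContDiff ℝ ((2 * M : ℕ) : ℕ∞) φ := by exact_mod_cast hφ
    rw [h, clm_iteratedDeriv_aux (innerSL ℝ pW) hφ' le_rfl x0, hs]
    simp [real_inner_comm]
  -- pW lies in the span of the derivatives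
  obtain ⟨c, hc⟩ := minimal_mem_span_aux hn0 v pW
    (by simpa [hv] using hpW1) hpW2
    (by intro q h1 h2; exact hmin q (by simpa [hv] using h1) h2)
  -- determinant computation
  rw [hder]
  refine det_bordered_aux _ _ (fun k => inner ℝ (iteratedDeriv k.val φ x0) pW) s c ?_ ?_ ?_
  · intro k
    show (inner ℝ (iteratedDeriv k.val φ x0) pW : ℝ) = _
    rw [← hc, inner_sum]
    refine Finset.sum_congr rfl fun l _ => ?_
    rw [real_inner_smul_right]
    simp only [Matrix.of_apply, hv, Fin.coe_castSucc]
    rw [if_pos l.isLt]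
  · intro k
    by_cases hk : k = Fin.last (2 * M)
    · subst hk
      have h1 : ¬ ((Fin.last (2 * M)).val < 2 * M) := by simp
      have h2 : ¬ ((Fin.last (2 * M)).val = 0) := by simp; omega
      simp only [Matrix.of_apply, if_neg h1, if_neg h2, if_pos rfl, Fin.val_last]
      rw [if_neg (lt_irrefl _), if_neg (show ¬ 2 * M = 0 by omega), if_pos trivial, ← hs]
      ring
    · have hkn : k.val ≠ 2 * M := fun h => hk (Fin.ext (by simp [h]))
      have hkv : k.val < 2 * M := by have := k.isLt; omega
      have h1 : ¬ ((Fin.last (2 * M)).val < 2 * M) := by simp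
      simp only [Matrix.of_apply, if_neg h1, if_neg hk]
      by_cases h0 : k.val = 0
      · rw [if_pos h0]
        have : (inner ℝ (iteratedDeriv k.val φ x0) pW : ℝ) = 1 := by
          rw [h0, iteratedDeriv_zero]; exact hpW1
        rw [this]; ring
      · rw [if_neg h0]
        have : (inner ℝ (iteratedDeriv k.val φ x0) pW : ℝ) = 0 := hpW2 ⟨k.val, hkv⟩ h0
        rw [this]; ring
  · intro k l
    simp only [Matrix.of_apply, Fin.coe_castSucc]
    rw [if_pos l.isLt]
end

section
/- Let $\mu$ be a positive measure on $S \subseteq \mathbb{R}$ and $\theta$ a kernel with all relevant products integrable. If the determinant function $(s_1,\ldots,s_M) \mapsto \det(\theta(t_i,s_j))_{i,j}$ is strictly positive $\mu^{\otimes M}$-a.e. on the ordered simplex $\{s_1 < \cdots < s_M\}$ and the support of $\mu$ contains at least $M$ points, then the Gram matrix with entries $G_{ij} = \int_S \theta(t_i,s)\theta(t_j,s)\,d\mu(s)$ satisfies $\det G > 0$. -/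
open MeasureTheory
open scoped BigOperators

/-- The (topological) support of a measure on `ℝ`: points all of whose neighborhoods
have positive measure. -/
def measureSupport (μ : Measure ℝ) : Set ℝ := {x | ∀ U ∈ nhds x, 0 < μ U}


lemma aux_integral_prod {M : ℕ} (μ : Measure ℝ) [SigmaFinite μ] (f : Fin M → ℝ → ℝ) :
    ∫ s : Fin M → ℝ, ∏ j, f j (s j) ∂(Measure.pi fun _ => μ) = ∏ j, ∫ x, f j x ∂μ := by
  letI : MeasureSpace ℝ := { volume := μ }
  haveI : SigmaFinite (volume : Measure ℝ) := ‹_›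
  exact MeasureTheory.integral_fintype_prod_eq_prod f

-- a strictly monotone permutation is the identity
lemma perm_strictMono_eq_one {M : ℕ} (π : Equiv.Perm (Fin M)) (h : StrictMono (π : Fin M → Fin M)) :
    π = 1 := by
  have h' : StrictMono (π.symm : Fin M → Fin M) := fun a b hab =>
    h.lt_iff_lt.mp (by simpa using hab)
  haveI : WellFoundedLT (Fin M) := inferInstance
  ext i
  have h1 : i ≤ π i := h.le_apply
  have h2 : i ≤ π.symm i := h'.le_apply
  have h3 : π i ≤ π (π.symm i) := h.monotone h2
  simp only [Equiv.apply_symm_apply] at h3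
  exact le_antisymm h3 h1

-- measurability of the strict-mono-after-permutation set
lemma measurableSet_strictMono_comp {M : ℕ} (τ : Equiv.Perm (Fin M)) :
    MeasurableSet {s : Fin M → ℝ | StrictMono (s ∘ τ)} := by
  have : {s : Fin M → ℝ | StrictMono (s ∘ τ)} =
      ⋂ (p : Fin M × Fin M) (_ : p.1 < p.2), {s : Fin M → ℝ | s (τ p.1) < s (τ p.2)} := by
    ext s
    simp only [Set.mem_iInter, Set.mem_setOf_eq]
    exact ⟨fun h p hp => h hp, fun h a b hab => h (a, b) hab⟩
  rw [this]
  exact MeasurableSet.iInter fun p => MeasurableSet.iInter fun _ =>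
    measurableSet_lt (measurable_pi_apply _) (measurable_pi_apply _)

-- positive measure of the ordered simplex
lemma pos_measure_strictMono {M : ℕ} (μ : Measure ℝ) [SigmaFinite μ]
    (hsupp : ∃ T : Finset ℝ, M ≤ T.card ∧ ↑T ⊆ measureSupport μ) :
    0 < (Measure.pi fun _ : Fin M => μ) {s : Fin M → ℝ | StrictMono s} := by
  obtain ⟨T, hTcard, hTsupp⟩ := hsupp
  obtain ⟨T', hT'sub, hT'card⟩ := Finset.exists_subset_card_eq hTcard
  set x : Fin M → ℝ := fun j => ((T'.orderIsoOfFin hT'card) j : ℝ) with hx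
  have hxmono : StrictMono x := fun a b hab => by
    exact_mod_cast (T'.orderIsoOfFin hT'card).strictMono hab
  have hxsupp : ∀ j, x j ∈ measureSupport μ := fun j =>
    hTsupp (hT'sub ((T'.orderIsoOfFin hT'card) j).2)
  classical
  have key : ∃ ε : ℝ, 0 < ε ∧ ∀ i j : Fin M, i < j → x i + ε ≤ x j - ε := by
    set P : Finset (Fin M × Fin M) := Finset.univ.filter fun p => p.1 < p.2 with hP
    rcases P.eq_empty_or_nonempty with hPe | hPn
    · refine ⟨1, one_pos, fun i j hij => ?_⟩
      exfalso
      have hmem : (i, j) ∈ P := Finset.mem_filter.mpr ⟨Finset.mem_univ _, hij⟩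
      rw [hPe] at hmem
      exact Finset.notMem_empty _ hmem
    · refine ⟨P.inf' hPn (fun p => (x p.2 - x p.1) / 2), ?_, ?_⟩
      · rw [Finset.lt_inf'_iff]
        intro p hp
        have : p.1 < p.2 := (Finset.mem_filter.mp hp).2
        have := hxmono this
        linarith
      · intro i j hij
        have hmem : (i, j) ∈ P := Finset.mem_filter.mpr ⟨Finset.mem_univ _, hij⟩
        have := Finset.inf'_le (fun p => (x p.2 - x p.1) / 2) hmem
        linarith
  obtain ⟨ε, hε, hsep⟩ := key
  have hbox : (Set.univ.pi fun j => Set.Ioo (x j - ε) (x j + ε)) ⊆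
      {s : Fin M → ℝ | StrictMono s} := by
    intro s hs i j hij
    have hi := hs i (Set.mem_univ i)
    have hj := hs j (Set.mem_univ j)
    have := hsep i j hij
    calc s i < x i + ε := hi.2
      _ ≤ x j - ε := this
      _ < s j := hj.1
  refine lt_of_lt_of_le ?_ (measure_mono hbox)
  rw [Measure.pi_pi]
  refine CanonicallyOrderedAdd.prod_pos.mpr fun j _ => ?_
  exact hxsupp j _ (Ioo_mem_nhds (by linarith) (by linarith))

/-- First half of Proposition 3.6 of the paper: if the kernel determinant is a.e. positive on
the ordered simplex and the support of the sampling measure has at least `M` points, then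
the Gram determinant is positive. -/
theorem stmt8 (M : ℕ) (μ : Measure ℝ) [SigmaFinite μ] (θ : ℝ → ℝ → ℝ) (t : Fin M → ℝ)
    (h1 : ∀ i j, Integrable (fun s => θ (t i) s * θ (t j) s) μ)
    (h2 : ∀ σ : Equiv.Perm (Fin M),
      Integrable (fun s : Fin M → ℝ => ∏ j, θ (t (σ j)) (s j) * θ (t j) (s j))
        (Measure.pi fun _ => μ))
    (hpos : ∀ᵐ s ∂((Measure.pi fun _ : Fin M => μ).restrict {s | StrictMono s}),
      0 < (Matrix.of fun i j : Fin M => θ (t i) (s j)).det)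
    (hsupp : ∃ T : Finset ℝ, M ≤ T.card ∧ ↑T ⊆ measureSupport μ) :
    0 < (Matrix.of fun i j : Fin M => ∫ s, θ (t i) s * θ (t j) s ∂μ).det := by
  classical
  set ν : Measure (Fin M → ℝ) := Measure.pi fun _ => μ with hν
  set A : (Fin M → ℝ) → Matrix (Fin M) (Fin M) ℝ :=
    fun s => Matrix.of fun i j => θ (t i) (s j) with hA
  set g : (Fin M → ℝ) → ℝ := fun s => (A s).det * ∏ j, θ (t j) (s j) with hg
  set S₀ : Set (Fin M → ℝ) := {s : Fin M → ℝ | StrictMono s} with hS₀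
  -- determinant expansion of A
  have hdetA : ∀ u : Fin M → ℝ, (A u).det =
      ∑ τ : Equiv.Perm (Fin M), ((Equiv.Perm.sign τ : ℤ) : ℝ) * ∏ j, θ (t (τ j)) (u j) := by
    intro u
    rw [Matrix.det_apply]
    refine Finset.sum_congr rfl fun τ _ => ?_
    simp [hA, Units.smul_def, zsmul_eq_mul]
  -- pointwise expansion of g
  have hgexp : ∀ s, g s = ∑ σ : Equiv.Perm (Fin M),
      ((Equiv.Perm.sign σ : ℤ) : ℝ) * ∏ j, θ (t (σ j)) (s j) * θ (t j) (s j) := by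
    intro s
    show (A s).det * ∏ j, θ (t j) (s j) = _
    rw [hdetA s, Finset.sum_mul]
    refine Finset.sum_congr rfl fun σ _ => ?_
    rw [mul_assoc, ← Finset.prod_mul_distrib]
  have hgint : Integrable g ν := by
    have h4 : g = fun s => ∑ σ : Equiv.Perm (Fin M),
        ((Equiv.Perm.sign σ : ℤ) : ℝ) * ∏ j, θ (t (σ j)) (s j) * θ (t j) (s j) :=
      funext hgexp
    rw [h4]
    exact integrable_finset_sum _ fun σ _ => (h2 σ).const_mul _
  -- Step A : det G = ∫ g
  have hdetG : (Matrix.of fun i j : Fin M => ∫ s, θ (t i) s * θ (t j) s ∂μ).det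
      = ∫ s, g s ∂ν := by
    rw [Matrix.det_apply]
    have h3 : ∀ σ : Equiv.Perm (Fin M),
        (∏ i, (Matrix.of fun i j : Fin M => ∫ s, θ (t i) s * θ (t j) s ∂μ) (σ i) i)
        = ∫ s, ∏ j, θ (t (σ j)) (s j) * θ (t j) (s j) ∂ν := by
      intro σ
      exact (aux_integral_prod μ (fun j x => θ (t (σ j)) x * θ (t j) x)).symm
    calc ∑ σ : Equiv.Perm (Fin M), Equiv.Perm.sign σ •
          ∏ i, (Matrix.of fun i j : Fin M => ∫ s, θ (t i) s * θ (t j) s ∂μ) (σ i) i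
        = ∑ σ : Equiv.Perm (Fin M), ∫ s, ((Equiv.Perm.sign σ : ℤ) : ℝ) *
            ∏ j, θ (t (σ j)) (s j) * θ (t j) (s j) ∂ν := by
          refine Finset.sum_congr rfl fun σ _ => ?_
          rw [h3 σ, integral_const_mul, Units.smul_def, zsmul_eq_mul]
      _ = ∫ s, ∑ σ : Equiv.Perm (Fin M), ((Equiv.Perm.sign σ : ℤ) : ℝ) *
            ∏ j, θ (t (σ j)) (s j) * θ (t j) (s j) ∂ν := by
          rw [← integral_finset_sum]
          exact fun σ _ => (h2 σ).const_mul _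
      _ = ∫ s, g s ∂ν := by
          refine integral_congr_ae (Filter.Eventually.of_forall fun s => ?_)
          rw [hgexp s]
  -- the pieces
  set E : Equiv.Perm (Fin M) → Set (Fin M → ℝ) := fun τ => {s | StrictMono (s ∘ τ)} with hE
  have hmeasE : ∀ τ, MeasurableSet (E τ) := fun τ => measurableSet_strictMono_comp τ
  have hdisj : Pairwise (Function.onFun Disjoint E) := by
    intro τ τ' hne
    refine Set.disjoint_left.mpr fun s hs hs' => hne ?_
    have hs1 : StrictMono (s ∘ τ) := hs
    have hs2 : StrictMono (s ∘ τ') := hs'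
    have hπ : StrictMono ((τ'.trans τ.symm : Equiv.Perm (Fin M)) : Fin M → Fin M) := by
      intro a b hab
      apply hs1.lt_iff_lt.mp
      show s (τ (τ.symm (τ' a))) < s (τ (τ.symm (τ' b)))
      simpa using hs2 hab
    have hπ1 : τ'.trans τ.symm = 1 := perm_strictMono_eq_one _ hπ
    ext j
    have h0 : τ.symm (τ' j) = j := by
      have := congrArg (fun p : Equiv.Perm (Fin M) => p j) hπ1
      simpa using this
    conv_lhs => rw [← h0]
    exact congrArg Fin.val (Equiv.apply_symm_apply τ _)
  have hcover : ∀ s : Fin M → ℝ, s ∉ (⋃ τ, E τ) → g s = 0 := by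
    intro s hsn
    by_cases hinj : Function.Injective s
    · exfalso
      apply hsn
      refine Set.mem_iUnion.mpr ⟨Tuple.sort s, ?_⟩
      exact (Tuple.monotone_sort s).strictMono_of_injective
        (hinj.comp (Tuple.sort s).injective)
    · rw [Function.not_injective_iff] at hinj
      obtain ⟨a, b, hab, hne⟩ := hinj
      have hdet0 : (A s).det = 0 :=
        Matrix.det_zero_of_column_eq hne fun k => by simp [hA, hab]
      show (A s).det * ∏ j, θ (t j) (s j) = 0
      rw [hdet0, zero_mul]
  have hsplit : ∫ s, g s ∂ν = ∑ τ : Equiv.Perm (Fin M), ∫ s in E τ, g s ∂ν := by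
    rw [← setIntegral_eq_integral_of_forall_compl_eq_zero hcover,
      integral_iUnion hmeasE hdisj hgint.integrableOn, tsum_fintype]
  -- the coordinate permutation maps
  set e : Equiv.Perm (Fin M) → ((Fin M → ℝ) ≃ᵐ (Fin M → ℝ)) :=
    fun τ => MeasurableEquiv.piCongrLeft (fun _ => ℝ) τ with he
  have happ : ∀ (τ : Equiv.Perm (Fin M)) (u : Fin M → ℝ) (i : Fin M),
      e τ u i = u (τ.symm i) := by
    intro τ u i
    have h5 : (Equiv.piCongrLeft (fun _ => ℝ) τ) u (τ (τ.symm i)) = u (τ.symm i) :=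
      Equiv.piCongrLeft_apply_apply (fun _ => ℝ) τ u (τ.symm i)
    rw [Equiv.apply_symm_apply] at h5
    simpa [he, MeasurableEquiv.coe_piCongrLeft] using h5
  have hmp : ∀ τ : Equiv.Perm (Fin M), MeasurePreserving (e τ) ν ν :=
    fun τ => measurePreserving_piCongrLeft (fun _ => μ) τ
  have hge : ∀ (τ : Equiv.Perm (Fin M)) (u : Fin M → ℝ),
      g (e τ u) = ((Equiv.Perm.sign τ : ℤ) : ℝ) * ((A u).det * ∏ j, θ (t (τ j)) (u j)) := by
    intro τ u
    have hcomp : (e τ u : Fin M → ℝ) = fun i => u (τ.symm i) := funext (happ τ u)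
    show (A (e τ u)).det * ∏ j, θ (t j) (e τ u j) = _
    rw [hcomp]
    have hdet : A (fun i => u (τ.symm i)) = (A u).submatrix id τ.symm := rfl
    rw [hdet, Matrix.det_permute']
    have hprod : (∏ j, θ (t j) (u (τ.symm j))) = ∏ j, θ (t (τ j)) (u j) :=
      Fintype.prod_equiv τ.symm _ _ (fun j => by rw [Equiv.apply_symm_apply])
    rw [hprod]
    have hsign : Equiv.Perm.sign τ.symm = Equiv.Perm.sign τ := Equiv.Perm.sign_symm τ
    rw [hsign]
    push_cast
    ring
  have hstep : ∀ τ : Equiv.Perm (Fin M),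
      ∫ s in E τ, g s ∂ν = ∫ u in S₀, g (e τ u) ∂ν := by
    intro τ
    have hpre : (e τ) ⁻¹' (E τ) = S₀ := by
      ext u
      have hcomp : (e τ u : Fin M → ℝ) ∘ ⇑τ = u := funext fun j => by
        rw [Function.comp_apply, happ, Equiv.symm_apply_apply]
      show StrictMono ((e τ u : Fin M → ℝ) ∘ ⇑τ) ↔ StrictMono u
      rw [hcomp]
    have h6 := (hmp τ).setIntegral_preimage_emb (e τ).measurableEmbedding g (E τ)
    rw [← h6, hpre]
  have hint : ∀ τ : Equiv.Perm (Fin M),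
      Integrable (fun u => g (e τ u)) (ν.restrict S₀) :=
    fun τ => (((hmp τ).integrable_comp_emb (e τ).measurableEmbedding).mpr hgint).integrableOn
  have hptwise : ∀ u : Fin M → ℝ, (∑ τ : Equiv.Perm (Fin M), g (e τ u)) = ((A u).det) ^ 2 := by
    intro u
    have h7 : (∑ τ : Equiv.Perm (Fin M), g (e τ u))
        = (A u).det * ∑ τ : Equiv.Perm (Fin M),
            ((Equiv.Perm.sign τ : ℤ) : ℝ) * ∏ j, θ (t (τ j)) (u j) := by
      rw [Finset.mul_sum]
      refine Finset.sum_congr rfl fun τ _ => ?_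
      rw [hge τ u]; ring
    rw [h7, ← hdetA u, sq]
  have hsum2 : (∑ τ : Equiv.Perm (Fin M), ∫ s in E τ, g s ∂ν)
      = ∫ u in S₀, ((A u).det) ^ 2 ∂ν := by
    calc (∑ τ : Equiv.Perm (Fin M), ∫ s in E τ, g s ∂ν)
        = ∑ τ : Equiv.Perm (Fin M), ∫ u in S₀, g (e τ u) ∂ν :=
          Finset.sum_congr rfl fun τ _ => hstep τ
      _ = ∫ u in S₀, ∑ τ : Equiv.Perm (Fin M), g (e τ u) ∂ν :=
          (integral_finset_sum _ fun τ _ => hint τ).symm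
      _ = ∫ u in S₀, ((A u).det) ^ 2 ∂ν :=
          integral_congr_ae (Filter.Eventually.of_forall fun u => hptwise u)
  rw [hdetG, hsplit, hsum2]
  -- positivity
  have hfint : Integrable (fun u => ((A u).det) ^ 2) (ν.restrict S₀) := by
    have h8 : (fun u : Fin M → ℝ => ((A u).det) ^ 2)
        = fun u => ∑ τ : Equiv.Perm (Fin M), g (e τ u) := funext fun u => (hptwise u).symm
    rw [h8]
    exact integrable_finset_sum _ fun τ _ => hint τ
  have hpos2 : ∀ᵐ u ∂ν.restrict S₀, 0 < ((A u).det) ^ 2 := hpos.mono fun u hu => pow_pos hu 2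
  rw [integral_pos_iff_support_of_nonneg_ae (Filter.Eventually.of_forall fun u => sq_nonneg _) hfint]
  have hnull : (ν.restrict S₀) {u | ¬ 0 < ((A u).det) ^ 2} = 0 := ae_iff.mp hpos2
  have hsub : (Function.support fun u => ((A u).det) ^ 2)ᶜ ⊆ {u | ¬ 0 < ((A u).det) ^ 2} := by
    intro u hu
    simp only [Set.mem_compl_iff, Function.mem_support, not_not] at hu
    simp only [Set.mem_setOf_eq, hu, lt_irrefl, not_false_eq_true]
  have hcnull : (ν.restrict S₀) (Function.support fun u => ((A u).det) ^ 2)ᶜ = 0 :=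
    measure_mono_null hsub hnull
  have h0 : 0 < ν S₀ := pos_measure_strictMono μ hsupp
  have h9 : ν S₀ = (ν.restrict S₀) Set.univ := (Measure.restrict_apply_univ _).symm
  refine lt_of_lt_of_le (h9 ▸ h0) ?_
  calc (ν.restrict S₀) Set.univ
      ≤ (ν.restrict S₀) (Function.support fun u => ((A u).det) ^ 2)
        + (ν.restrict S₀) (Function.support fun u => ((A u).det) ^ 2)ᶜ := by
        rw [← Set.union_compl_self (Function.support fun u => ((A u).det) ^ 2)]
        exact measure_union_le _ _
    _ = (ν.restrict S₀) (Function.support fun u => ((A u).det) ^ 2) := by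
        rw [hcnull, add_zero]
end

section
/- For $N \geq 1$ and real numbers $x_1 < \cdots < x_N$, $y_1 < \cdots < y_N$, the determinant $\det\big(e^{x_i y_j}\big)_{1 \le i,j \le N}$ is strictly positive. -/
open Finset

/-- A nontrivial exponential sum with distinct frequencies cannot vanish at
`N` distinct (strictly increasing) points. -/
lemma exp_sum_zeros : ∀ (N : ℕ) (y c x : Fin N → ℝ), Function.Injective y →
    StrictMono x → (∀ i, ∑ j, c j * Real.exp (y j * x i) = 0) → c = 0 := by
  intro N
  induction N with
  | zero => intro y c x _ _ _; funext i; exact i.elim0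
  | succ N ih =>
    intro y c x hy hx h
    set yN := y (Fin.last N) with hyN
    -- normalized function g
    set g : ℝ → ℝ := fun t => ∑ j, c j * Real.exp ((y j - yN) * t) with hg
    have hg0 : ∀ i, g (x i) = 0 := by
      intro i
      have : g (x i) = Real.exp (-(yN * x i)) * ∑ j, c j * Real.exp (y j * x i) := by
        rw [Finset.mul_sum]
        refine Finset.sum_congr rfl fun j _ => ?_
        rw [sub_mul, Real.exp_sub]
        rw [Real.exp_neg]
        ring
      rw [this, h i, mul_zero]
    -- derivative of g
    have hderiv : ∀ t : ℝ, HasDerivAt g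
        (∑ j, c j * ((y j - yN) * Real.exp ((y j - yN) * t))) t := by
      intro t
      apply HasDerivAt.fun_sum
      intro j _
      have h1 : HasDerivAt (fun t : ℝ => (y j - yN) * t) ((y j - yN) * 1) t :=
        (hasDerivAt_id t).const_mul _
      have h2 := (h1.exp).const_mul (c j)
      convert h2 using 1
      · rfl
      ring
    -- Rolle between consecutive zeros
    have hroll : ∀ i : Fin N, ∃ z ∈ Set.Ioo (x i.castSucc) (x i.succ),
        (∑ j, c j * ((y j - yN) * Real.exp ((y j - yN) * z))) = 0 := by
      intro i
      have hab : x i.castSucc < x i.succ := hx Fin.castSucc_lt_succ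
      have hcont : ContinuousOn g (Set.Icc (x i.castSucc) (x i.succ)) :=
        (continuous_finset_sum _ fun j _ =>
          (continuous_const.mul ((continuous_const.mul continuous_id).rexp))).continuousOn
      have hfI : g (x i.castSucc) = g (x i.succ) := by rw [hg0, hg0]
      exact exists_hasDerivAt_eq_zero hab hcont hfI fun z _ => hderiv z
    choose z hz hz0 using hroll
    have hzmono : StrictMono z := by
      intro i j hij
      have h1 : (z i) < x i.succ := (hz i).2
      have h2 : x j.castSucc < z j := (hz j).1
      have h3 : x i.succ ≤ x j.castSucc := by
        apply hx.monotone
        exact Fin.succ_le_castSucc_iff.2 hij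
      linarith
    -- apply induction hypothesis
    have hIH : (fun j : Fin N => c j.castSucc * (y j.castSucc - yN)) = 0 := by
      apply ih (fun j => y j.castSucc - yN) _ z
      · intro a b hab
        have : y a.castSucc = y b.castSucc := by
          have := sub_left_injective hab
          simpa using this
        exact Fin.castSucc_injective _ (hy this)
      · exact hzmono
      · intro i
        have := hz0 i
        rw [Fin.sum_univ_castSucc] at this
        simp only [← hyN, sub_self, zero_mul, mul_zero, add_zero] at this
        rw [← this]
        refine Finset.sum_congr rfl fun j _ => ?_
        ring
    have hc0 : ∀ j : Fin N, c j.castSucc = 0 := by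
      intro j
      have h1 := congrFun hIH j
      simp only [Pi.zero_apply] at h1
      rcases mul_eq_zero.1 h1 with h | h
      · exact h
      · exfalso
        have : y j.castSucc = yN := by linarith [sub_eq_zero.1 h]
        have := hy this
        exact (Fin.castSucc_lt_last j).ne this
    -- last coefficient
    have hclast : c (Fin.last N) = 0 := by
      have h0 := h 0
      rw [Fin.sum_univ_castSucc] at h0
      have : ∑ j : Fin N, c j.castSucc * Real.exp (y j.castSucc * x 0) = 0 := by
        refine Finset.sum_eq_zero fun j _ => by rw [hc0 j, zero_mul]
      rw [this, zero_add] at h0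
      rcases mul_eq_zero.1 h0 with h | h
      · exact h
      · exact absurd h (Real.exp_ne_zero _)
    funext j
    rcases Fin.lastCases (motive := fun j => c j = 0) hclast hc0 j with h
    exact h

/-- The exponential-kernel determinant never vanishes for strictly increasing nodes. -/
lemma det_exp_ne_zero (N : ℕ) (x y : Fin N → ℝ) (hx : StrictMono x)
    (hy : StrictMono y) :
    (Matrix.of fun i j : Fin N => Real.exp (x i * y j)).det ≠ 0 := by
  intro h0
  obtain ⟨v, hv, hmv⟩ := Matrix.exists_mulVec_eq_zero_iff.2 h0
  apply hv
  apply exp_sum_zeros N y v x hy.injective hx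
  intro i
  have := congrFun hmv i
  simp only [Matrix.mulVec, dotProduct, Matrix.of_apply, Pi.zero_apply] at this
  rw [← this]
  refine Finset.sum_congr rfl fun j _ => ?_
  ring_nf

/-- Strict total positivity of the exponential kernel: for `x₁ < ⋯ < x_N` and
`y₁ < ⋯ < y_N`, `det(e^{xᵢ yⱼ}) > 0`. -/
theorem stmt11 (N : ℕ) (hN : 1 ≤ N) (x y : Fin N → ℝ)
    (hx : StrictMono x) (hy : StrictMono y) :
    0 < (Matrix.of fun i j : Fin N => Real.exp (x i * y j)).det := by
  -- interpolate between y and the integer nodes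
  set Y : ℝ → Fin N → ℝ := fun t j => (1 - t) * y j + t * ((j : ℕ) : ℝ) with hY
  have hYmono : ∀ t ∈ Set.Icc (0:ℝ) 1, StrictMono (Y t) := by
    intro t ht j k hjk
    have h1 : (1 - t) * y j ≤ (1 - t) * y k :=
      mul_le_mul_of_nonneg_left (hy hjk).le (by linarith [ht.2])
    have h2 : t * ((j : ℕ) : ℝ) ≤ t * ((k : ℕ) : ℝ) := by
      apply mul_le_mul_of_nonneg_left _ ht.1
      exact Nat.cast_le.2 hjk.le
    rcases lt_or_eq_of_le ht.2 with h | h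
    · have : (1 - t) * y j < (1 - t) * y k :=
        mul_lt_mul_of_pos_left (hy hjk) (by linarith)
      simp only [hY]; linarith
    · have ht1 : t = 1 := h
      have : t * ((j : ℕ) : ℝ) < t * ((k : ℕ) : ℝ) := by
        rw [ht1, one_mul, one_mul]
        exact Nat.cast_lt.2 hjk
      simp only [hY]; linarith
  set f : ℝ → ℝ := fun t =>
    (Matrix.of fun i j : Fin N => Real.exp (x i * Y t j)).det with hf
  have hcont : Continuous f := by
    apply Continuous.matrix_det
    apply continuous_matrix
    intro i j
    simp only [Matrix.of_apply, hY]
    fun_prop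
  have hne : ∀ t ∈ Set.Icc (0:ℝ) 1, f t ≠ 0 := fun t ht =>
    det_exp_ne_zero N x (Y t) hx (hYmono t ht)
  have hf1 : 0 < f 1 := by
    have : f 1 = (Matrix.vandermonde fun i => Real.exp (x i)).det := by
      simp only [hf, hY]
      congr 1
      ext i j
      simp only [Matrix.of_apply, Matrix.vandermonde, sub_self, zero_mul, one_mul,
        zero_add]
      rw [mul_comm, Real.exp_nat_mul]
    rw [this, Matrix.det_vandermonde]
    apply Finset.prod_pos
    intro i _
    apply Finset.prod_pos
    intro j hj
    have : x i < x j := hx (Finset.mem_Ioi.1 hj)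
    simpa [sub_pos] using Real.exp_lt_exp.2 this
  have hf0 : 0 < f 0 := by
    rcases lt_trichotomy (f 0) 0 with h | h | h
    · exfalso
      have : (0:ℝ) ∈ Set.Icc (f 0) (f 1) := ⟨h.le, hf1.le⟩
      obtain ⟨t, ht, hft⟩ := intermediate_value_Icc (by norm_num : (0:ℝ) ≤ 1)
        hcont.continuousOn this
      exact hne t ht hft
    · exact absurd h (hne 0 (by norm_num))
    · exact h
  have : f 0 = (Matrix.of fun i j : Fin N => Real.exp (x i * y j)).det := by
    simp only [hf, hY]
    congr 1
    ext i j
    norm_num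
  rwa [this] at hf0
end

section
/- (Continuity lemma for divided-difference determinants) Let $u_1,\ldots,u_n \in C^{n-1}(\mathbb{R})$. The function $U(s_1,\ldots,s_n) = \frac{1}{\prod_{1 \le i < j \le n}(s_j - s_i)} \det\big(u_j(s_i)\big)_{1\le i,j\le n}$, defined for pairwise distinct $s_i$, extends to a continuous function on $\mathbb{R}^n$, and there is a constant $\gamma > 0$ such that $U(s,\ldots,s) = \gamma \det\big(u_j^{(i-1)}(s)\big)_{1\le i,j\le n}$ for all $s \in \mathbb{R}$. -/
open scoped BigOperators
open intervalIntegral MeasureTheory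

noncomputable def dd : (k : ℕ) → (ℝ → ℝ) → (Fin (k+1) → ℝ) → ℝ
  | 0, f, x => f (x 0)
  | (k+1), f, x => ∫ t in (0:ℝ)..1, t ^ k * dd k (deriv f) (fun i => (1-t) * x 0 + t * x i.succ)

lemma contDiff_deriv_of_succ {k : ℕ} {f : ℝ → ℝ} (hf : ContDiff ℝ ((k:ℕ)+1) f) :
    ContDiff ℝ (k:ℕ) (deriv f) := by
  have h : ((k:WithTop ℕ∞)+1) = (k : WithTop ℕ∞) + 1 := by push_cast; ring
  rw [h, contDiff_succ_iff_deriv] at hf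
  exact hf.2.2

lemma dd_cont (k : ℕ) (f : ℝ → ℝ) (hf : ContDiff ℝ (k:ℕ) f) :
    Continuous fun x : Fin (k+1) → ℝ => dd k f x := by
  induction k generalizing f with
  | zero => simpa [dd, Function.comp_def] using hf.continuous.comp (continuous_apply (0 : Fin 1))
  | succ k ih =>
    have hd : ContDiff ℝ (k:ℕ) (deriv f) := contDiff_deriv_of_succ (by exact_mod_cast hf)
    have hc : Continuous (Function.uncurry fun (x : Fin (k+2) → ℝ) (t : ℝ) =>
        t ^ k * dd k (deriv f) (fun i => (1-t) * x 0 + t * x i.succ)) := by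
      apply Continuous.mul
      · exact continuous_snd.pow k
      · exact (ih _ hd).comp (continuous_pi fun i => by fun_prop)
    simpa [dd] using continuous_parametric_intervalIntegral_of_continuous' hc 0 1

lemma dd_diag (k : ℕ) (f : ℝ → ℝ) (hf : ContDiff ℝ (k:ℕ) f) (a : ℝ) :
    dd k f (fun _ => a) = iteratedDeriv k f a / (k.factorial : ℝ) := by
  induction k generalizing f with
  | zero => simp [dd]
  | succ k ih =>
    have hd : ContDiff ℝ (k:ℕ) (deriv f) := contDiff_deriv_of_succ (by exact_mod_cast hf)
    have hnodes : ∀ t : ℝ, (fun i : Fin (k+1) =>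
        (1-t) * (fun _ : Fin (k+2) => a) 0 + t * (fun _ : Fin (k+2) => a) i.succ)
        = (fun _ : Fin (k+1) => a) := by
      intro t; funext i; simp; ring
    have : dd (k+1) f (fun _ => a)
        = ∫ t in (0:ℝ)..1, t ^ k * (iteratedDeriv k (deriv f) a / (k.factorial : ℝ)) := by
      simp only [dd]
      congr 1
      funext t
      rw [hnodes t, ih _ hd]
    rw [this, intervalIntegral.integral_mul_const, integral_pow]
    rw [iteratedDeriv_succ', Nat.factorial_succ]
    push_cast
    field_simp
    simp

lemma integral_line (f : ℝ → ℝ) (hf : ContDiff ℝ 1 f) (a b : ℝ) (hab : a ≠ b) :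
    ∫ t in (0:ℝ)..1, deriv f ((1-t)*a + t*b) = (f b - f a)/(b - a) := by
  have hline : ∀ t : ℝ, HasDerivAt (fun t : ℝ => (1-t)*a + t*b) (b - a) t := by
    intro t
    have h1 : HasDerivAt (fun t : ℝ => (1-t)*a + t*b) ((0 - 1)*a + 1*b) t :=
      (((hasDerivAt_const t (1:ℝ)).sub (hasDerivAt_id t)).mul_const a).add
        ((hasDerivAt_id t).mul_const b)
    exact h1.congr_deriv (by ring)
  have hg : ∀ t ∈ Set.uIcc (0:ℝ) 1, HasDerivAt (fun t => f ((1-t)*a + t*b))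
      (deriv f ((1-t)*a + t*b) * (b - a)) t := by
    intro t _
    exact ((hf.differentiable one_ne_zero ((1-t)*a + t*b)).hasDerivAt).comp t (hline t)
  have hcont : Continuous fun t : ℝ => deriv f ((1-t)*a + t*b) * (b - a) := by
    have := hf.continuous_deriv le_rfl
    fun_prop
  have key := intervalIntegral.integral_eq_sub_of_hasDerivAt hg
    (hcont.intervalIntegrable 0 1)
  have h2 : ∫ t in (0:ℝ)..1, deriv f ((1-t)*a + t*b) * (b - a)
      = (∫ t in (0:ℝ)..1, deriv f ((1-t)*a + t*b)) * (b - a) :=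
    intervalIntegral.integral_mul_const _ _
  rw [h2] at key
  have hba : b - a ≠ 0 := sub_ne_zero.mpr (Ne.symm hab)
  field_simp
  rw [key]
  simp

lemma lag_sum (m : ℕ) (hm : 2 ≤ m) (x : Fin m → ℝ) (hx : Function.Injective x) :
    ∑ i : Fin m, (∏ l ∈ Finset.univ.erase i, (x i - x l))⁻¹ = 0 := by
  classical
  have hne : (Finset.univ : Finset (Fin m)).Nonempty := by
    refine ⟨⟨0, by omega⟩, Finset.mem_univ _⟩
  have hs := Lagrange.sum_basis (v := x) (s := Finset.univ) hx.injOn hne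
  have hcoeff := congrArg (fun p => Polynomial.coeff p (m - 1)) hs
  rw [Polynomial.finset_sum_coeff] at hcoeff
  have hone : (1 : Polynomial ℝ).coeff (m - 1) = 0 := by
    rw [Polynomial.coeff_one]
    simp only [if_neg (by omega : ¬ (m - 1) = 0)]
  rw [hone] at hcoeff
  rw [← hcoeff]
  apply Finset.sum_congr rfl
  intro i _
  have hdeg : (Lagrange.basis Finset.univ x i).natDegree = m - 1 := by
    rw [Lagrange.natDegree_basis hx.injOn (Finset.mem_univ i)]
    simp
  rw [← hdeg, Polynomial.coeff_natDegree]
  rw [Lagrange.basis, Polynomial.leadingCoeff_prod]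
  rw [← Finset.prod_inv_distrib]
  apply Finset.prod_congr rfl
  intro l hl
  rw [Lagrange.basisDivisor, Polynomial.leadingCoeff_mul, Polynomial.leadingCoeff_C,
    (Polynomial.monic_X_sub_C (x l)).leadingCoeff, mul_one]

lemma prod_ite_erase {N : ℕ} (a : Fin N) (g : Fin N → ℝ) :
    ∏ l : Fin N, (if l = a then 1 else g l) = ∏ l ∈ Finset.univ.erase a, g l := by
  rw [← Finset.mul_prod_erase Finset.univ _ (Finset.mem_univ a), if_pos rfl, one_mul]
  exact Finset.prod_congr rfl fun l hl => if_neg (Finset.ne_of_mem_erase hl)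

lemma erase_succ_prod {k : ℕ} (g : Fin (k+2) → ℝ) (i : Fin (k+1)) :
    ∏ l ∈ Finset.univ.erase i.succ, g l = g 0 * ∏ l ∈ Finset.univ.erase i, g l.succ := by
  rw [← prod_ite_erase i.succ g, Fin.prod_univ_succ, if_neg (Fin.succ_ne_zero i).symm,
    ← prod_ite_erase i (fun l => g l.succ)]
  congr 1
  apply Finset.prod_congr rfl
  intro l _
  simp [Fin.succ_inj]

lemma dd_inj : ∀ (k : ℕ) (f : ℝ → ℝ), ContDiff ℝ (k:ℕ) f →
    ∀ (x : Fin (k+1) → ℝ), Function.Injective x →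
    dd k f x = ∑ i, f (x i) / ∏ l ∈ Finset.univ.erase i, (x i - x l) := by
  intro k
  induction k with
  | zero =>
    intro f _ x _
    have h : (Finset.univ.erase (0 : Fin 1)) = ∅ := by decide
    simp [dd, h]
  | succ k ih =>
    intro f hf x hx
    have hd : ContDiff ℝ (k:ℕ) (deriv f) := contDiff_deriv_of_succ (by exact_mod_cast hf)
    have hf1 : ContDiff ℝ 1 f := hf.of_le (by exact_mod_cast Nat.le_add_left 1 k)
    set y : ℝ → Fin (k+1) → ℝ := fun t i => (1-t) * x 0 + t * x i.succ with hy
    set C : Fin (k+1) → ℝ := fun i => ∏ l ∈ Finset.univ.erase i, (x i.succ - x l.succ) with hC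
    have hx0 : ∀ i : Fin (k+1), x 0 ≠ x i.succ := by
      intro i h
      exact (Fin.succ_ne_zero i) (hx h).symm
    -- Step A : pointwise identity for t ≠ 0
    have key : ∀ t : ℝ, t ≠ 0 →
        t ^ k * dd k (deriv f) (y t)
          = ∑ i, deriv f (y t i) / C i := by
      intro t ht
      have hyinj : Function.Injective (y t) := by
        intro a b h
        simp only [hy] at h
        have : t * (x a.succ - x b.succ) = 0 := by linarith [h]
        rcases mul_eq_zero.mp this with h' | h'
        · exact absurd h' ht
        · exact Fin.succ_injective _ (hx (by linarith [h']))
      rw [ih (deriv f) hd (y t) hyinj, Finset.mul_sum]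
      apply Finset.sum_congr rfl
      intro i _
      have hprod : ∏ l ∈ Finset.univ.erase i, (y t i - y t l) = t ^ k * C i := by
        have : ∀ l, y t i - y t l = t * (x i.succ - x l.succ) := by
          intro l; simp only [hy]; ring
        simp only [this]
        rw [Finset.prod_mul_distrib, Finset.prod_const, Finset.card_erase_of_mem
          (Finset.mem_univ i), Finset.card_univ, Fintype.card_fin]
        norm_num [hC]
      rw [hprod, ← mul_div_assoc, mul_div_mul_left _ _ (pow_ne_zero k ht)]
    -- Step B : integrate
    have hcy : ∀ i : Fin (k+1), Continuous fun t => y t i := by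
      intro i; simp only [hy]; fun_prop
    have hint : ∀ i ∈ Finset.univ, IntervalIntegrable
        (fun t => deriv f (y t i) / C i) MeasureTheory.volume 0 1 := by
      intro i _
      exact ((hd.continuous.comp (hcy i)).div_const (C i)).intervalIntegrable 0 1
    have hdd : dd (k+1) f x = ∫ t in (0:ℝ)..1, t ^ k * dd k (deriv f) (y t) := rfl
    have hB2 : (∫ t in (0:ℝ)..1, t ^ k * dd k (deriv f) (y t))
        = ∫ t in (0:ℝ)..1, ∑ i, deriv f (y t i) / C i := by
      apply intervalIntegral.integral_congr_ae
      filter_upwards with t ht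
      rw [Set.uIoc_of_le (by norm_num : (0:ℝ) ≤ 1)] at ht
      exact key t (ne_of_gt ht.1)
    have hline : ∀ i : Fin (k+1), (∫ t in (0:ℝ)..1, deriv f (y t i))
        = (f (x i.succ) - f (x 0))/(x i.succ - x 0) := fun i =>
      integral_line f hf1 (x 0) (x i.succ) (hx0 i)
    have hB : dd (k+1) f x = ∑ i : Fin (k+1),
        ((f (x i.succ) - f (x 0))/(x i.succ - x 0)) / C i := by
      rw [hdd, hB2, intervalIntegral.integral_finset_sum hint]
      apply Finset.sum_congr rfl
      intro i _
      rw [intervalIntegral.integral_div, hline i]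
    -- Step C : algebra
    have hD : ∀ i : Fin (k+1), ∏ l ∈ Finset.univ.erase i.succ, (x i.succ - x l)
        = (x i.succ - x 0) * C i := fun i => erase_succ_prod (fun l => x i.succ - x l) i
    have hterm : ∀ i : Fin (k+1), ((f (x i.succ) - f (x 0))/(x i.succ - x 0)) / C i
        = f (x i.succ) / ∏ l ∈ Finset.univ.erase i.succ, (x i.succ - x l)
          - f (x 0) * (∏ l ∈ Finset.univ.erase i.succ, (x i.succ - x l))⁻¹ := by
      intro i
      rw [div_div, ← hD i, sub_div, div_eq_mul_inv (f (x 0))]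
    have hlag := lag_sum (k+2) (by omega) x hx
    rw [Fin.sum_univ_succ] at hlag
    have hsum : ∑ i : Fin (k+1), (∏ l ∈ Finset.univ.erase i.succ, (x i.succ - x l))⁻¹
        = - (∏ l ∈ Finset.univ.erase (0:Fin (k+2)), (x 0 - x l))⁻¹ := by linarith [hlag]
    rw [hB]
    simp_rw [hterm]
    rw [Finset.sum_sub_distrib, ← Finset.mul_sum, hsum,
      Fin.sum_univ_succ (f := fun j : Fin (k+2) => f (x j) / ∏ l ∈ Finset.univ.erase j, (x j - x l)),
      div_eq_mul_inv (f (x 0))]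
    ring

/-- Lemma A.1 of the paper (continuity of divided-difference determinants): the rescaled
Vandermonde-type determinant extends continuously to `ℝⁿ`, with value on the diagonal a
positive multiple of the Wronskian-type determinant. -/
theorem stmt16 (n : ℕ) (hn : 1 ≤ n) (u : Fin n → ℝ → ℝ)
    (hu : ∀ j, ContDiff ℝ (n - 1) (u j)) :
    ∃ U : (Fin n → ℝ) → ℝ, Continuous U ∧
      (∀ s : Fin n → ℝ, Function.Injective s →
        U s = (1 / ∏ p ∈ Finset.univ.filter (fun p : Fin n × Fin n => p.1 < p.2),
                (s p.2 - s p.1)) *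
          (Matrix.of fun i j : Fin n => u j (s i)).det) ∧
      ∃ γ : ℝ, 0 < γ ∧ ∀ a : ℝ,
        U (fun _ => a) = γ * (Matrix.of fun i j : Fin n => iteratedDeriv i.val (u j) a).det := by
  classical
  have hcd : ∀ (i : Fin n) (j : Fin n), ContDiff ℝ (i.val : ℕ) (u j) := by
    intro i j
    refine (hu j).of_le ?_
    exact_mod_cast Nat.cast_le.mpr (by omega : i.val ≤ n - 1)
  set e : ∀ i : Fin n, Fin (i.val + 1) → Fin n := fun i => Fin.castLE i.isLt with he
  refine ⟨fun s => (Matrix.of fun i j : Fin n =>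
      dd i.val (u j) (fun l : Fin (i.val+1) => s (e i l))).det, ?_, ?_, ?_⟩
  · apply Continuous.matrix_det
    apply continuous_matrix
    intro i j
    exact (dd_cont i.val (u j) (hcd i j)).comp (continuous_pi fun l => continuous_apply _)
  · intro s hs
    set A : Matrix (Fin n) (Fin n) ℝ := Matrix.of fun i j : Fin n => u j (s i) with hA
    set L : Matrix (Fin n) (Fin n) ℝ := Matrix.of fun i k : Fin n =>
      if k.val ≤ i.val then
        (∏ l ∈ Finset.univ.filter (fun l : Fin n => l.val ≤ i.val ∧ l ≠ k), (s k - s l))⁻¹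
      else 0 with hL
    have heinj : ∀ i : Fin n, Function.Injective (e i) := fun i => Fin.castLE_injective _
    have hecast : ∀ (i : Fin n) (k : Fin n), (hk : k.val ≤ i.val) →
        e i ⟨k.val, by omega⟩ = k := by
      intro i k hk; apply Fin.ext; rfl
    have himg1 : ∀ i : Fin n, Finset.image (e i) Finset.univ
        = Finset.univ.filter (fun k : Fin n => k.val ≤ i.val) := by
      intro i; ext k
      simp only [Finset.mem_image, Finset.mem_univ, true_and, Finset.mem_filter]
      constructor
      · rintro ⟨m, rfl⟩
        exact Nat.lt_succ_iff.mp m.isLt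
      · intro hk
        exact ⟨⟨k.val, by omega⟩, hecast i k hk⟩
    have himg2 : ∀ (i : Fin n) (m : Fin (i.val+1)),
        Finset.image (e i) (Finset.univ.erase m)
        = Finset.univ.filter (fun l : Fin n => l.val ≤ i.val ∧ l ≠ e i m) := by
      intro i m; ext k
      simp only [Finset.mem_image, Finset.mem_erase, Finset.mem_univ, true_and, and_true,
        Finset.mem_filter]
      constructor
      · rintro ⟨m', hm', rfl⟩
        exact ⟨Nat.lt_succ_iff.mp m'.isLt, fun h => hm' (heinj i h)⟩
      · rintro ⟨hk, hkm⟩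
        refine ⟨⟨k.val, by omega⟩, ?_, hecast i k hk⟩
        intro h; apply hkm; rw [← hecast i k hk, h]
    have hML : (Matrix.of fun i j : Fin n => dd i.val (u j) fun l => s (e i l)) = L * A := by
      ext i j
      rw [Matrix.mul_apply]
      have hsinj : Function.Injective (fun l : Fin (i.val+1) => s (e i l)) :=
        fun a b h => heinj i (hs h)
      show dd i.val (u j) (fun l => s (e i l)) = _
      rw [dd_inj i.val (u j) (hcd i j) _ hsinj]
      rw [← Finset.sum_filter_add_sum_filter_not Finset.univ
        (fun k : Fin n => k.val ≤ i.val) (fun k => L i k * A k j)]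
      have hz : ∑ k ∈ Finset.univ.filter (fun k : Fin n => ¬ k.val ≤ i.val),
          L i k * A k j = 0 := by
        apply Finset.sum_eq_zero
        intro k hk
        rw [Finset.mem_filter] at hk
        simp only [hL, Matrix.of_apply, if_neg hk.2, zero_mul]
      rw [hz, add_zero, ← himg1 i, Finset.sum_image (fun a _ b _ h => heinj i h)]
      apply Finset.sum_congr rfl
      intro m _
      have hm : (e i m).val ≤ i.val := Nat.lt_succ_iff.mp m.isLt
      simp only [hL, hA, Matrix.of_apply, if_pos hm]
      rw [← himg2 i m, Finset.prod_image (fun a _ b _ h => heinj i h), div_eq_mul_inv, mul_comm]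
    have hLtri : L.BlockTriangular OrderDual.toDual := by
      intro i k hik
      have hik' : i < k := hik
      simp only [hL, Matrix.of_apply]
      exact if_neg (not_le.mpr (Fin.lt_def.mp hik'))
    have hfilter_eq : ∀ i : Fin n,
        Finset.univ.filter (fun l : Fin n => l.val ≤ i.val ∧ l ≠ i)
        = Finset.univ.filter (fun l : Fin n => l < i) := by
      intro i
      apply Finset.filter_congr
      intro l _
      constructor
      · rintro ⟨h1, h2⟩
        exact Fin.lt_def.mpr (lt_of_le_of_ne h1 (fun hv => h2 (Fin.ext hv)))
      · intro h
        exact ⟨le_of_lt (Fin.lt_def.mp h), ne_of_lt h⟩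
    have hdetL : L.det = ∏ i : Fin n,
        (∏ l ∈ Finset.univ.filter (fun l : Fin n => l < i), (s i - s l))⁻¹ := by
      rw [Matrix.det_of_lowerTriangular L hLtri]
      apply Finset.prod_congr rfl
      intro i _
      simp only [hL, Matrix.of_apply, if_pos (le_refl i.val)]
      rw [hfilter_eq i]
    have hPalt : (∏ p ∈ Finset.univ.filter (fun p : Fin n × Fin n => p.1 < p.2),
          (s p.2 - s p.1))
        = ∏ i : Fin n, ∏ l ∈ Finset.univ.filter (fun l : Fin n => l < i), (s i - s l) := by
      rw [Finset.prod_filter]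
      rw [show (Finset.univ : Finset (Fin n × Fin n)) = Finset.univ ×ˢ Finset.univ from
        (Finset.univ_product_univ).symm]
      rw [Finset.prod_product_right]
      apply Finset.prod_congr rfl
      intro i _
      rw [Finset.prod_filter]
    have hPne : (∏ p ∈ Finset.univ.filter (fun p : Fin n × Fin n => p.1 < p.2),
        (s p.2 - s p.1)) ≠ 0 := by
      rw [hPalt]
      apply Finset.prod_ne_zero_iff.mpr
      intro i _
      apply Finset.prod_ne_zero_iff.mpr
      intro l hl
      rw [Finset.mem_filter] at hl
      exact sub_ne_zero.mpr (fun h => absurd (hs h) (ne_of_gt hl.2))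
    show (Matrix.of fun i j : Fin n => dd i.val (u j) fun l => s (e i l)).det = _
    rw [hML, Matrix.det_mul, hdetL, Finset.prod_inv_distrib, ← hPalt, one_div]
  · refine ⟨∏ i : Fin n, ((i.val.factorial : ℝ))⁻¹, ?_, ?_⟩
    · exact Finset.prod_pos fun i _ => inv_pos.mpr (by exact_mod_cast i.val.factorial_pos)
    · intro a
      have h1 : (Matrix.of fun i j : Fin n =>
          dd i.val (u j) (fun l : Fin (i.val+1) => (fun _ => a) (e i l)))
          = Matrix.of fun i j : Fin n =>
            ((i.val.factorial : ℝ))⁻¹ * iteratedDeriv i.val (u j) a := by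
        ext i j
        simp only [Matrix.of_apply]
        rw [show (fun l : Fin (i.val+1) => (fun _ : Fin n => a) (e i l)) = fun _ => a from rfl,
          dd_diag i.val (u j) (hcd i j) a, div_eq_inv_mul]
      show (Matrix.of fun i j : Fin n =>
          dd i.val (u j) (fun l : Fin (i.val+1) => (fun _ : Fin n => a) (e i l))).det = _
      rw [h1]
      exact Matrix.det_mul_column _ _
end

section
/- (Necessary and sufficient determinant criterion for the NDSC) Let $H$ be a real Hilbert space, $\varphi : D \to H$ of class $C^2$ with the required boundedness, $x_1 < \cdots < x_M$ in the interior of the interval $D$, and suppose $\Gamma_x = (\varphi(x_1), \varphi'(x_1), \ldots, \varphi(x_M), \varphi'(x_M))$ has full column rank. Let $C(x,y) = \langle \varphi(x), \varphi(y)\rangle$, set $(u_0, u_1, u_2, \ldots, u_{2M}) = (1, C(\cdot,x_1), \partial_2 C(\cdot,x_1), \ldots, C(\cdot,x_M), \partial_2 C(\cdot,x_M))$, and let $D_V$ be the continuous extension of $t \mapsto \frac{2}{\prod_i (t-x_i)^2}\det\big(\text{row } (u_j(t))_j \text{ above rows } (u_j(x_i))_j, (u_j'(x_i))_j\big)$.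 Then the Non-Degenerate Source Condition for $m_0 = \sum_i a_i \delta_{x_i}$ (with all $a_i > 0$) — namely, the vanishing-derivatives precertificate $\eta_V$ satisfies $\eta_V(t) < 1$ for all $t \in D \setminus \{x_i\}$ and $\eta_V''(x_i) < 0$ for all $i$ — holds if and only if $D_V(t) > 0$ for all $t \in D$. -/
open scoped BigOperators

/-- The family `(1, C(·,x₁), ∂₂C(·,x₁), …, C(·,x_M), ∂₂C(·,x_M))` of correlation functions,
where `C(t,y) = ⟪φ(t), φ(y)⟫`; `none` indexes the constant function `1`. -/
noncomputable def corrFam {H : Type*} [NormedAddCommGroup H] [InnerProductSpace ℝ H]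
    {M : ℕ} (φ : ℝ → H) (x : Fin M → ℝ) : Option (Fin M × Fin 2) → ℝ → ℝ
  | none => fun _ => 1
  | some (j, e) =>
    if e = 0 then fun t => (inner ℝ (φ t) (φ (x j)) : ℝ)
    else fun t => (inner ℝ (φ t) (deriv φ (x j)) : ℝ)

open Filter Topology

lemma gram_det_pos {H : Type*} [NormedAddCommGroup H] [InnerProductSpace ℝ H]
    {ι : Type*} [Fintype ι] [DecidableEq ι] {v : ι → H}
    (hlin : LinearIndependent ℝ v) :
    0 < (Matrix.of fun p q : ι => (inner ℝ (v p) (v q) : ℝ)).det := by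
  have hpd : (Matrix.of fun p q : ι => (inner ℝ (v p) (v q) : ℝ)).PosDef := by
    rw [Matrix.posDef_iff_dotProduct_mulVec]
    constructor
    · ext p q
      simp [Matrix.IsHermitian, Matrix.conjTranspose, real_inner_comm]
    · intro y hy
      have hne : ∑ p, y p • v p ≠ 0 := by
        intro h
        exact hy (funext fun i => (Fintype.linearIndependent_iff.mp hlin (fun p => y p) h) i)
      have : dotProduct (star y) ((Matrix.of fun p q : ι => (inner ℝ (v p) (v q) : ℝ)).mulVec y)
          = (inner ℝ (∑ p, y p • v p) (∑ q, y q • v q) : ℝ) := by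
        simp [dotProduct, Matrix.mulVec, inner_sum, sum_inner, real_inner_smul_left,
          real_inner_smul_right, Finset.mul_sum, mul_comm, mul_left_comm,
          real_inner_comm]
        rw [← real_inner_self_eq_norm_sq, sum_inner]
        simp [inner_sum, real_inner_smul_left, real_inner_smul_right, Finset.mul_sum, mul_left_comm]
      rw [this]
      exact lt_of_le_of_ne real_inner_self_nonneg (fun h => hne (inner_self_eq_zero.mp h.symm))
  exact hpd.det_pos


lemma minnorm_mem_span {H : Type*} [NormedAddCommGroup H] [InnerProductSpace ℝ H]
    [CompleteSpace H] {ι : Type*} [Fintype ι] (v : ι → H) (p : H)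
    (hmin : ∀ q : H, (∀ i, (inner ℝ (v i) q : ℝ) = (inner ℝ (v i) p : ℝ)) → ‖p‖ ≤ ‖q‖) :
    p ∈ Submodule.span ℝ (Set.range v) := by
  set K := Submodule.span ℝ (Set.range v) with hK
  have hfd : FiniteDimensional ℝ K := FiniteDimensional.span_of_finite ℝ (Set.finite_range v)
  set q : H := (K.orthogonalProjection p : H) with hq
  have hqK : q ∈ K := (K.orthogonalProjection p).2
  have hper : p - q ∈ Kᗮ := K.sub_starProjection_mem_orthogonal p
  have hinner : ∀ i, (inner ℝ (v i) q : ℝ) = (inner ℝ (v i) p : ℝ) := by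
    intro i
    have hvK : v i ∈ K := Submodule.subset_span (Set.mem_range_self i)
    have h0 : (inner ℝ (v i) (p - q) : ℝ) = 0 :=
      (Submodule.mem_orthogonal K (p - q)).mp hper (v i) hvK
    rw [inner_sub_right] at h0
    linarith
  have hle : ‖p‖ ≤ ‖q‖ := hmin q hinner
  have horth : (inner ℝ q (p - q) : ℝ) = 0 := by
    have := (Submodule.mem_orthogonal K (p - q)).mp hper q hqK
    exact this
  have hpyth : ‖p‖ ^ 2 = ‖q‖ ^ 2 + ‖p - q‖ ^ 2 := by
    have := norm_add_sq_real q (p - q)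
    simpa [horth] using this
  have : ‖p - q‖ ^ 2 ≤ 0 := by nlinarith [norm_nonneg p, norm_nonneg q]
  have hpq : p = q := by
    have : ‖p - q‖ = 0 := by nlinarith [norm_nonneg (p - q)]
    have := norm_eq_zero.mp this
    exact sub_eq_zero.mp this
  rw [hpq]; exact hqK



lemma quad_limit (f : ℝ → ℝ) (a : ℝ) (hf : ContDiff ℝ 2 f) (h0 : f a = 0)
    (h1 : deriv f a = 0) :
    Tendsto (fun t => f t / (t - a) ^ 2) (𝓝[≠] a) (𝓝 (deriv (deriv f) a / 2)) := by
  have hdf : Differentiable ℝ f := hf.differentiable (by norm_num)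
  have hdf' : Differentiable ℝ (deriv f) := by
    have h2 : ContDiff ℝ (1+1 : ℕ) f := by exact_mod_cast hf
    have : ContDiff ℝ 1 (deriv f) := (contDiff_succ_iff_deriv.mp h2).2.2
    exact this.differentiable one_ne_zero
  have hdiv : Tendsto (fun t => deriv f t / (2 * (t - a))) (𝓝[≠] a)
      (𝓝 (deriv (deriv f) a / 2)) := by
    have hslope : Tendsto (slope (deriv f) a) (𝓝[≠] a) (𝓝 (deriv (deriv f) a)) :=
      hasDerivAt_iff_tendsto_slope.mp (hdf' a).hasDerivAt
    have : Tendsto (fun t => slope (deriv f) a t / 2) (𝓝[≠] a) (𝓝 (deriv (deriv f) a / 2)) :=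
      hslope.div_const 2
    refine this.congr' ?_
    filter_upwards [self_mem_nhdsWithin] with t ht
    have hta : t - a ≠ 0 := sub_ne_zero.mpr ht
    rw [slope_def_field, h1]
    rw [div_div]
    congr 1
    · rw [sub_zero]
    · ring
  refine HasDerivAt.lhopital_zero_nhdsNE ?_ ?_ ?_ ?_ ?_ hdiv
  · filter_upwards with t; exact (hdf t).hasDerivAt
  · filter_upwards with t
    have : HasDerivAt (fun s => (s - a) ^ 2) (2 * (t - a) ^ 1 * 1) t :=
      (((hasDerivAt_id t).sub_const a).pow 2)
    simpa using this
  · filter_upwards [self_mem_nhdsWithin] with t ht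
    exact mul_ne_zero two_ne_zero (sub_ne_zero.mpr ht)
  · have : Tendsto f (𝓝 a) (𝓝 (f a)) := (hdf a).continuousAt
    rw [h0] at this
    exact this.mono_left nhdsWithin_le_nhds
  · have : Tendsto (fun t => (t - a) ^ 2) (𝓝 a) (𝓝 ((a - a) ^ 2)) := by
      exact (((continuous_id.sub continuous_const).pow 2)).tendsto a
    simpa using this.mono_left nhdsWithin_le_nhds

lemma hasDerivAt_inner_const {H : Type*} [NormedAddCommGroup H] [InnerProductSpace ℝ H]
    {φ : ℝ → H} {s : ℝ} (hφ : DifferentiableAt ℝ φ s) (w : H) :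
    HasDerivAt (fun t => (inner ℝ (φ t) w : ℝ)) ((inner ℝ (deriv φ s) w : ℝ)) s := by
  simpa using HasDerivAt.inner ℝ hφ.hasDerivAt (hasDerivAt_const s w)

section entries

variable {H : Type*} [NormedAddCommGroup H] [InnerProductSpace ℝ H]
  {M : ℕ} (φ : ℝ → H) (x : Fin M → ℝ)

lemma corrFam_apply (q : Fin M × Fin 2) (s : ℝ) :
    corrFam φ x (some q) s
      = (inner ℝ (φ s) (if q.2 = 0 then φ (x q.1) else deriv φ (x q.1)) : ℝ) := by
  obtain ⟨j, e⟩ := q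
  by_cases he : e = 0 <;> simp [corrFam, he]

lemma corrFam_deriv (hφ : Differentiable ℝ φ) (q : Fin M × Fin 2) (s : ℝ) :
    deriv (corrFam φ x (some q)) s
      = (inner ℝ (deriv φ s) (if q.2 = 0 then φ (x q.1) else deriv φ (x q.1)) : ℝ) := by
  obtain ⟨j, e⟩ := q
  by_cases he : e = 0 <;>
    simp only [corrFam, he, if_true, if_false] <;>
    exact (hasDerivAt_inner_const (hφ _) _).deriv

lemma corrFam_none_deriv (s : ℝ) : deriv (corrFam φ x none) s = 0 := by
  simp [corrFam]

end entries

lemma det_identity {H : Type*} [NormedAddCommGroup H] [InnerProductSpace ℝ H]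
    {M : ℕ} (φ : ℝ → H) (hφ : Differentiable ℝ φ) (x : Fin M → ℝ) (pV : H)
    (α : Fin M × Fin 2 → ℝ)
    (hα : ∑ q, α q • (if q.2 = 0 then φ (x q.1) else deriv φ (x q.1)) = pV)
    (hpV1 : ∀ i, (inner ℝ (φ (x i)) pV : ℝ) = 1)
    (hpV2 : ∀ i, (inner ℝ (deriv φ (x i)) pV : ℝ) = 0) (t : ℝ) :
    (Matrix.of fun r c : Option (Fin M × Fin 2) =>
        match r with
        | none => corrFam φ x c t
        | some (i, e) =>
          if e = 0 then corrFam φ x c (x i) else deriv (corrFam φ x c) (x i)).det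
    = (1 - (inner ℝ (φ t) pV : ℝ)) *
      (Matrix.of fun p q : Fin M × Fin 2 =>
        (inner ℝ (if p.2 = 0 then φ (x p.1) else deriv φ (x p.1))
          (if q.2 = 0 then φ (x q.1) else deriv φ (x q.1)) : ℝ)).det := by
  classical
  set v : Fin M × Fin 2 → H := fun p => if p.2 = 0 then φ (x p.1) else deriv φ (x p.1) with hv
  set A : Matrix (Option (Fin M × Fin 2)) (Option (Fin M × Fin 2)) ℝ :=
    Matrix.of fun r c =>
      match r with
      | none => corrFam φ x c t
      | some (i, e) =>
        if e = 0 then corrFam φ x c (x i) else deriv (corrFam φ x c) (x i) with hA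
  -- entry facts
  have hAnn : A none none = 1 := by simp [hA, corrFam]
  have hAns : ∀ q, A none (some q) = (inner ℝ (φ t) (v q) : ℝ) := by
    intro q; simp [hA, corrFam_apply, hv]
  have hAsn : ∀ p : Fin M × Fin 2, A (some p) none = if p.2 = 0 then 1 else 0 := by
    rintro ⟨i, e⟩
    by_cases he : e = 0 <;> simp [hA, he, corrFam, corrFam_none_deriv]
  have hAss : ∀ p q : Fin M × Fin 2, A (some p) (some q) = (inner ℝ (v p) (v q) : ℝ) := by
    rintro ⟨i, e⟩ q
    by_cases he : e = 0 <;>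
      simp [hA, he, corrFam_apply, corrFam_deriv φ x hφ, hv]
  -- the coefficients for the row operation on the transpose
  set c : Option (Fin M × Fin 2) → ℝ := fun r => Option.elim r 1 (fun q => -α q) with hc
  set T := A.transpose with hT
  set N := T.updateRow none (∑ k, c k • T k) with hN
  have hdetN : N.det = A.det := by
    rw [hN, Matrix.det_updateRow_sum T none c]
    simp [hc, hT, Matrix.det_transpose]
  have hinner_pV : ∀ w : H, (inner ℝ w pV : ℝ) = ∑ q, α q * (inner ℝ w (v q) : ℝ) := by
    intro w
    rw [← hα, inner_sum]
    refine Finset.sum_congr rfl fun q _ => ?_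
    rw [show (α q • if q.2 = 0 then φ (x q.1) else deriv φ (x q.1)) = α q • v q from rfl,
      real_inner_smul_right]
  have hvpV : ∀ p : Fin M × Fin 2, (inner ℝ (v p) pV : ℝ) = if p.2 = 0 then 1 else 0 := by
    rintro ⟨i, e⟩
    by_cases he : e = 0 <;> simp [hv, he, hpV1, hpV2]
  -- compute the new row
  have hrow_none : ∀ col, N none col =
      Option.elim col (1 - (inner ℝ (φ t) pV : ℝ)) (fun _ => 0) := by
    intro col
    have hNval : N none col = ∑ k, c k * T k col := by
      simp [hN, Matrix.updateRow_self, Finset.sum_apply]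
    rw [hNval, Fintype.sum_option]
    rcases col with _ | p
    · have h1 : T none none = 1 := hAnn
      have h2 : ∀ q, T (some q) none = (inner ℝ (φ t) (v q) : ℝ) := fun q => hAns q
      simp only [hc, Option.elim, h1, h2, hinner_pV (φ t)]
      simp [Finset.sum_neg_distrib]
      ring_nf
    · have h1 : T none (some p) = if p.2 = 0 then 1 else 0 := hAsn p
      have h2 : ∀ q, T (some q) (some p) = (inner ℝ (v p) (v q) : ℝ) := fun q => hAss p q
      simp only [hc, Option.elim, h1, h2]
      rw [show ∑ q, (-α q) * (inner ℝ (v p) (v q) : ℝ)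
          = -(inner ℝ (v p) pV : ℝ) by rw [hinner_pV (v p)]; simp [Finset.sum_neg_distrib],
        hvpV p]
      ring
  have hrow_some : ∀ q col, N (some q) col = T (some q) col := fun q col =>
    congrFun (Matrix.updateRow_ne (by simp)) col
  -- block decomposition
  set G : Matrix (Fin M × Fin 2) (Fin M × Fin 2) ℝ :=
    Matrix.of fun p q => (inner ℝ (v p) (v q) : ℝ) with hG
  set Cl : Matrix (Fin M × Fin 2) PUnit.{1} ℝ := Matrix.of fun q _ => (inner ℝ (φ t) (v q) : ℝ)
    with hCl
  set On : Matrix PUnit.{1} PUnit.{1} ℝ := Matrix.of fun _ _ => 1 - (inner ℝ (φ t) pV : ℝ) with hOn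
  have hNeq : N = (Matrix.fromBlocks G.transpose Cl 0 On).submatrix
      (Equiv.optionEquivSumPUnit.{0,0} (Fin M × Fin 2)) (Equiv.optionEquivSumPUnit.{0,0} (Fin M × Fin 2)) := by
    ext r col
    rcases r with _ | q <;> rcases col with _ | p
    · simpa [Equiv.optionEquivSumPUnit, Matrix.fromBlocks, hOn] using hrow_none none
    · simpa [Equiv.optionEquivSumPUnit, Matrix.fromBlocks] using hrow_none (some p)
    · rw [hrow_some q none]
      simpa [Equiv.optionEquivSumPUnit, Matrix.fromBlocks, hCl, hT] using hAns q
    · rw [hrow_some q (some p)]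
      simpa [Equiv.optionEquivSumPUnit, Matrix.fromBlocks, hG, hT] using hAss p q
  have : N.det = G.det * (1 - (inner ℝ (φ t) pV : ℝ)) := by
    rw [hNeq, Matrix.det_submatrix_equiv_self, Matrix.det_fromBlocks_zero₂₁,
      Matrix.det_transpose]
    congr 1
    simp [hOn, Matrix.det_unique]
  rw [← hdetN, this, hG]
  ring



/-- Theorem 3.4 of the paper: the Non-Degenerate Source Condition holds for
`m₀ = ∑ aᵢ δ_{xᵢ}` (with `aᵢ > 0`) if and only if the continuous extension `F` of the
rescaled determinant `D_V` is strictly positive on `D`. -/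
theorem stmt19 {H : Type*} [NormedAddCommGroup H] [InnerProductSpace ℝ H] [CompleteSpace H]
    (M : ℕ) (hM : 1 ≤ M) (D : Set ℝ) (hD : D.OrdConnected)
    (φ : ℝ → H) (hφ : ContDiff ℝ 2 φ)
    (x : Fin M → ℝ) (hx : StrictMono x) (hxD : ∀ i, x i ∈ interior D)
    (a : Fin M → ℝ) (ha : ∀ i, 0 < a i)
    (hlin : LinearIndependent ℝ (fun p : Fin M × Fin 2 =>
      if p.2 = 0 then φ (x p.1) else deriv φ (x p.1)))
    (pV : H)
    (hpV1 : ∀ i, (inner ℝ (φ (x i)) pV : ℝ) = 1)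
    (hpV2 : ∀ i, (inner ℝ (deriv φ (x i)) pV : ℝ) = 0)
    (hmin : ∀ q : H, (∀ i, (inner ℝ (φ (x i)) q : ℝ) = 1) →
      (∀ i, (inner ℝ (deriv φ (x i)) q : ℝ) = 0) → ‖pV‖ ≤ ‖q‖)
    (F : ℝ → ℝ) (hFc : ContinuousOn F D)
    (hF : ∀ t ∈ D, t ∉ Set.range x →
      F t = (2 / ∏ i, (t - x i) ^ 2) *
        (Matrix.of fun r c : Option (Fin M × Fin 2) =>
          match r with
          | none => corrFam φ x c t
          | some (i, e) =>
            if e = 0 then corrFam φ x c (x i) else deriv (corrFam φ x c) (x i)).det) :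
    ((∀ t ∈ D, t ∉ Set.range x → (inner ℝ (φ t) pV : ℝ) < 1) ∧
      (∀ i, iteratedDeriv 2 (fun t => (inner ℝ (φ t) pV : ℝ)) (x i) < 0)) ↔
    (∀ t ∈ D, 0 < F t) := by
  
  classical
  have hφd : Differentiable ℝ φ := hφ.differentiable (by norm_num)
  set v : Fin M × Fin 2 → H := fun p => if p.2 = 0 then φ (x p.1) else deriv φ (x p.1) with hv
  set η : ℝ → ℝ := fun t => (inner ℝ (φ t) pV : ℝ) with hη
  -- coefficients of pV
  have hvpV : ∀ p : Fin M × Fin 2, (inner ℝ (v p) pV : ℝ) = if p.2 = 0 then 1 else 0 := by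
    rintro ⟨i, e⟩
    by_cases he : e = 0 <;> simp [hv, he, hpV1, hpV2]
  have hspan : pV ∈ Submodule.span ℝ (Set.range v) := by
    refine minnorm_mem_span v pV fun q hq => hmin q ?_ ?_
    · intro i
      have := hq (i, 0)
      simpa [hv, hpV1] using this
    · intro i
      have := hq (i, 1)
      simpa [hv, hpV2] using this
  obtain ⟨α, hα⟩ := (Submodule.mem_span_range_iff_exists_fun ℝ).mp hspan
  -- Gram determinant
  set G : Matrix (Fin M × Fin 2) (Fin M × Fin 2) ℝ :=
    Matrix.of fun p q => (inner ℝ (v p) (v q) : ℝ) with hG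
  have hΔ : 0 < G.det := gram_det_pos hlin
  -- determinant identity
  have hdet : ∀ t : ℝ,
      (Matrix.of fun r c : Option (Fin M × Fin 2) =>
        match r with
        | none => corrFam φ x c t
        | some (i, e) =>
          if e = 0 then corrFam φ x c (x i) else deriv (corrFam φ x c) (x i)).det
      = (1 - η t) * G.det := fun t => det_identity φ hφd x pV α hα hpV1 hpV2 t
  -- rewritten formula for F off the spikes
  have hF' : ∀ t ∈ D, t ∉ Set.range x →
      F t = (2 / ∏ i, (t - x i) ^ 2) * ((1 - η t) * G.det) := by
    intro t ht hnt
    rw [hF t ht hnt, hdet t]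
  have hxinj : Function.Injective x := hx.injective
  have hprod : ∀ t : ℝ, t ∉ Set.range x → 0 < ∏ i, (t - x i) ^ 2 := by
    intro t hnt
    refine Finset.prod_pos fun i _ => ?_
    have : t - x i ≠ 0 := sub_ne_zero.mpr fun h => hnt ⟨i, h.symm⟩
    positivity
  have hFiff : ∀ t ∈ D, t ∉ Set.range x → (0 < F t ↔ η t < 1) := by
    intro t ht hnt
    rw [hF' t ht hnt]
    have hp := hprod t hnt
    have hc : 0 < 2 / ∏ i, (t - x i) ^ 2 := by positivity
    constructor
    · intro h
      by_contra hcon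
      push_neg at hcon
      have h2 : (1 - η t) * G.det ≤ 0 := mul_nonpos_iff.mpr (Or.inr ⟨by linarith, hΔ.le⟩)
      nlinarith
    · intro h
      have : 0 < 1 - η t := by linarith
      positivity
  -- regularity of η
  have hηC : ContDiff ℝ 2 η := by
    have h1 : ContDiff ℝ 2 fun t => ((innerSL ℝ pV) (φ t) : ℝ) :=
      (innerSL ℝ pV).contDiff.comp hφ
    have : η = fun t => ((innerSL ℝ pV) (φ t) : ℝ) := by
      funext t
      simp [hη, innerSL_apply_apply, real_inner_comm]
    rw [this]
    exact h1
  have hderη : ∀ s : ℝ, deriv η s = (inner ℝ (deriv φ s) pV : ℝ) := fun s =>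
    (hasDerivAt_inner_const (hφd s) pV).deriv
  -- second-derivative shorthand
  set s2 : Fin M → ℝ := fun i => deriv (deriv η) (x i) with hs2
  have hit : iteratedDeriv 2 η = deriv (deriv η) := by
    rw [iteratedDeriv_succ, iteratedDeriv_one]
  -- limits at the spikes
  set P : Fin M → ℝ := fun i => ∏ j ∈ Finset.univ.erase i, (x i - x j) ^ 2 with hP
  have hPpos : ∀ i, 0 < P i := by
    intro i
    refine Finset.prod_pos fun j hj => ?_
    have hji : j ≠ i := Finset.ne_of_mem_erase hj
    have : x i - x j ≠ 0 := sub_ne_zero.mpr fun h => hji (hxinj h.symm)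
    positivity
  have hxiD : ∀ i, x i ∈ D := fun i => interior_subset (hxD i)
  have hFxi : ∀ i, F (x i) = -(G.det) * s2 i / P i := by
    intro i
    set s : Set ℝ := D \ Set.range x with hsdef
    set U : Set ℝ := interior D ∩ ⋂ j ∈ Finset.univ.erase i, ({x j}ᶜ : Set ℝ) with hU
    have hUopen : IsOpen U :=
      isOpen_interior.inter (isOpen_biInter_finset fun j _ => isOpen_compl_singleton)
    have hUmem : x i ∈ U := by
      refine ⟨hxD i, ?_⟩
      simp only [Set.mem_iInter, Set.mem_compl_iff, Set.mem_singleton_iff]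
      intro j hj
      exact fun h => (Finset.ne_of_mem_erase hj) (hxinj h).symm
    have hUsub : ∀ t ∈ U, t ≠ x i → t ∉ Set.range x := by
      rintro t ⟨htD, htj⟩ hti ⟨j, rfl⟩
      by_cases hji : j = i
      · exact hti (by rw [hji])
      · simp only [Set.mem_iInter, Set.mem_compl_iff, Set.mem_singleton_iff] at htj
        exact htj j (Finset.mem_erase.mpr ⟨hji, Finset.mem_univ j⟩) rfl
    have hsmem : s ∈ 𝓝[≠] (x i) := by
      rw [mem_nhdsWithin]
      refine ⟨U, hUopen, hUmem, ?_⟩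
      rintro t ⟨htU, hti⟩
      have hti' : t ≠ x i := hti
      exact ⟨interior_subset htU.1, hUsub t htU hti'⟩
    have hle1 : 𝓝[≠] (x i) ≤ 𝓝[s] (x i) :=
      le_inf nhdsWithin_le_nhds (le_principal_iff.mpr hsmem)
    haveI hne : (𝓝[s] (x i)).NeBot := Filter.neBot_of_le hle1
    have hsub1 : 𝓝[s] (x i) ≤ 𝓝[≠] (x i) := by
      refine nhdsWithin_mono _ ?_
      rintro t ⟨htD, htr⟩
      exact fun h => htr ⟨i, (Set.mem_singleton_iff.mp h).symm⟩
    have hsub2 : 𝓝[s] (x i) ≤ 𝓝[D] (x i) := nhdsWithin_mono _ fun t ht => ht.1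
    -- the limit of the explicit formula
    set f : ℝ → ℝ := fun t => 1 - η t with hfdef
    have hf0 : f (x i) = 0 := by simp [hfdef, hη, hpV1 i]
    have hderf : deriv f = fun u => -(deriv η u) := funext fun u => deriv_const_sub 1
    have hf1 : deriv f (x i) = 0 := by
      rw [hderf]
      simp [hderη, hpV2 i]
    have hfC : ContDiff ℝ 2 f := contDiff_const.sub hηC
    have hddf : deriv (deriv f) (x i) = -(s2 i) := by
      rw [hderf, hs2]
      exact deriv.neg
    have hql : Filter.Tendsto (fun t => f t / (t - x i) ^ 2) (𝓝[≠] (x i))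
        (𝓝 (-(s2 i) / 2)) := by
      have := quad_limit f (x i) hfC hf0 hf1
      rwa [hddf] at this
    have hcont2 : Continuous fun t : ℝ => ∏ j ∈ Finset.univ.erase i, (t - x j) ^ 2 :=
      continuous_finset_prod _ fun j _ => ((continuous_id.sub continuous_const).pow 2)
    have hq2 : Filter.Tendsto (fun t => 2 * G.det / ∏ j ∈ Finset.univ.erase i, (t - x j) ^ 2)
        (𝓝 (x i)) (𝓝 (2 * G.det / P i)) := by
      exact Filter.Tendsto.div tendsto_const_nhds (hcont2.tendsto (x i)) (hPpos i).ne'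
    have hglim : Filter.Tendsto (fun t => (2 / ∏ j, (t - x j) ^ 2) * ((1 - η t) * G.det))
        (𝓝[≠] (x i)) (𝓝 (-(G.det) * s2 i / P i)) := by
      have hmul := hql.mul (hq2.mono_left nhdsWithin_le_nhds)
      have hval : (-(s2 i) / 2) * (2 * G.det / P i) = -(G.det) * s2 i / P i := by
        field_simp
      rw [hval] at hmul
      refine hmul.congr' ?_
      have hUmem' : U ∈ 𝓝[≠] (x i) := nhdsWithin_le_nhds (hUopen.mem_nhds hUmem)
      filter_upwards [self_mem_nhdsWithin, hUmem'] with t hti htU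
      have hti' : t ≠ x i := hti
      have hnt : t ∉ Set.range x := hUsub t htU hti'
      have hA : (t - x i) ^ 2 ≠ 0 := pow_ne_zero 2 (sub_ne_zero.mpr hti')
      have hB : (∏ j ∈ Finset.univ.erase i, (t - x j) ^ 2) ≠ 0 := by
        refine Finset.prod_ne_zero_iff.mpr fun j hj => ?_
        exact pow_ne_zero 2 (sub_ne_zero.mpr fun h => hnt ⟨j, h.symm⟩)
      have hsplit : ∏ j, (t - x j) ^ 2
          = (t - x i) ^ 2 * ∏ j ∈ Finset.univ.erase i, (t - x j) ^ 2 :=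
        (Finset.mul_prod_erase Finset.univ _ (Finset.mem_univ i)).symm
      rw [hsplit]
      field_simp [hfdef]
      ring
    have hT1 : Filter.Tendsto F (𝓝[s] (x i)) (𝓝 (-(G.det) * s2 i / P i)) := by
      refine (hglim.mono_left hsub1).congr' ?_
      filter_upwards [self_mem_nhdsWithin] with t ht
      exact (hF' t ht.1 ht.2).symm
    have hT2 : Filter.Tendsto F (𝓝[s] (x i)) (𝓝 (F (x i))) :=
      (hFc (x i) (hxiD i)).mono_left hsub2
    exact tendsto_nhds_unique hT2 hT1
  -- final equivalence
  constructor
  · rintro ⟨h1, h2⟩ t ht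
    by_cases hnt : t ∈ Set.range x
    · obtain ⟨i, rfl⟩ := hnt
      rw [hFxi i]
      have hs2neg : s2 i < 0 := by
        have h2' := h2 i
        rw [hit] at h2'
        exact h2'
      exact div_pos (by nlinarith) (hPpos i)
    · exact (hFiff t ht hnt).mpr (h1 t ht hnt)
  · intro hFpos
    refine ⟨fun t ht hnt => (hFiff t ht hnt).mp (hFpos t ht), fun i => ?_⟩
    have hpos := hFpos (x i) (hxiD i)
    rw [hFxi i] at hpos
    have hs2neg : s2 i < 0 := by
      by_contra hcon
      push_neg at hcon
      have : -(G.det) * s2 i / P i ≤ 0 :=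
        div_nonpos_iff.mpr (Or.inr ⟨by nlinarith, (hPpos i).le⟩)
      linarith
    rw [hit]
    exact hs2neg
end
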